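/- arXiv:1906.00096 — 4 statements merged into one kernel-verified Lean document; each statement's English description precedes it below -/
import Mathlib

section
/- Every admissible Iterated Function System (Γ,p) admits an invariant probability measure μ ∈ M_1(0,1) which is ergodic, i.e., μ is an extreme point of the convex set of invariant probability measures of P: μ cannot be written as tν_1 + (1−t)ν_2 with t ∈ (0,1) and ν_1 ≠ ν_2 both invariant probability measures. -/
open MeasureTheory Set Filter Topology

noncomputable section

/-- The Markov operator of an iterated function system `(g, p)` on `[0,1]`. -/
def markovOp {k : ℕ} (g : Fin k → ℝ → ℝ) (p : Fin k → ℝ) (μ : Measure ℝ) : Measure ℝ :=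
  ∑ i : Fin k, ENNReal.ofReal (p i) • Measure.map (g i) μ

/-- `p` is a probability vector. -/
def ProbVec {k : ℕ} (p : Fin k → ℝ) : Prop :=
  (∀ i, 0 ≤ p i) ∧ ∑ i : Fin k, p i = 1

/-- Membership in `M₁(0,1)`: Borel probability measures on `[0,1]` giving full mass
to the open interval `(0,1)`. -/
def MemM1 (μ : Measure ℝ) : Prop :=
  IsProbabilityMeasure μ ∧ μ (Ioo (0 : ℝ) 1) = 1

/-- The set `N_{M,α}`. -/
def Nset (M α : ℝ) : Set (Measure ℝ) :=
  {μ | MemM1 μ ∧ ∀ x ∈ Icc (0 : ℝ) 1,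
    μ (Icc (0 : ℝ) x) ≤ ENNReal.ofReal (M * x ^ α) ∧
    μ (Icc (1 - x) 1) ≤ ENNReal.ofReal (M * x ^ α)}

/-- The class `C⁺_β`: continuous nondecreasing maps of `[0,1]` fixing `0` and `1`,
continuously differentiable on `[0,β]` and `[1-β,1]`. -/
structure CPlus (β : ℝ) (g : ℝ → ℝ) : Prop where
  mapsTo : MapsTo g (Icc (0 : ℝ) 1) (Icc (0 : ℝ) 1)
  contOn : ContinuousOn g (Icc (0 : ℝ) 1)
  mono : MonotoneOn g (Icc (0 : ℝ) 1)
  map_zero : g 0 = 0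
  map_one : g 1 = 1
  c1_left : ContDiffOn ℝ 1 g (Icc (0 : ℝ) β)
  c1_right : ContDiffOn ℝ 1 g (Icc (1 - β) 1)

/-- `g` is a homeomorphism of `[0,1]` (a continuous bijection of the compact
interval; continuity of the inverse is automatic). -/
def IsIccHomeo (g : ℝ → ℝ) : Prop :=
  MapsTo g (Icc (0 : ℝ) 1) (Icc (0 : ℝ) 1) ∧ InjOn g (Icc (0 : ℝ) 1) ∧
    SurjOn g (Icc (0 : ℝ) 1) (Icc (0 : ℝ) 1)

/-- Admissible iterated function system generated by homeomorphisms in `C⁺_β`: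
strictly positive probabilities, maps moving every interior point both down and up,
and positive Lyapunov exponents at the common fixed points `0` and `1`
(the one-sided derivatives there being positive). -/
structure Admissible (β : ℝ) {k : ℕ} (g : Fin k → ℝ → ℝ) (p : Fin k → ℝ) : Prop where
  cplus : ∀ i, CPlus β (g i)
  homeo : ∀ i, IsIccHomeo (g i)
  p_pos : ∀ i, 0 < p i
  p_sum : ∑ i : Fin k, p i = 1
  below : ∀ x ∈ Ioo (0 : ℝ) 1, ∃ i, g i x < x
  above : ∀ x ∈ Ioo (0 : ℝ) 1, ∃ j, x < g j x
  deriv0_pos : ∀ i, 0 < derivWithin (g i) (Icc (0 : ℝ) 1) 0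
  deriv1_pos : ∀ i, 0 < derivWithin (g i) (Icc (0 : ℝ) 1) 1
  lyap0 : 0 < ∑ i : Fin k, p i * Real.log (derivWithin (g i) (Icc (0 : ℝ) 1) 0)
  lyap1 : 0 < ∑ i : Fin k, p i * Real.log (derivWithin (g i) (Icc (0 : ℝ) 1) 1)

/-- Composition of the maps of an IFS along a finite word:
`wordComp g [i_n, …, i_1] = g i_n ∘ ⋯ ∘ g i_1`. -/
def wordComp {k : ℕ} (g : Fin k → ℝ → ℝ) : List (Fin k) → ℝ → ℝ
  | [], x => x
  | i :: w, x => g i (wordComp g w x)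

/-- Composition of the first `n` maps along an infinite word `ω`:
`iterComp g ω n = g (ω (n-1)) ∘ ⋯ ∘ g (ω 0)`. -/
def iterComp {k : ℕ} (g : Fin k → ℝ → ℝ) (ω : ℕ → Fin k) : ℕ → ℝ → ℝ
  | 0 => id
  | n + 1 => g (ω n) ∘ iterComp g ω n

/-- Supremum of `|f|` over a set `K`. -/
def supOn (K : Set ℝ) (f : ℝ → ℝ) : ℝ :=
  sSup ((fun x => |f x|) '' K)

/-- The Fortet–Mourier distance: the Fortet–Mourier norm of `μ - ν`. -/
def FMdist (μ ν : Measure ℝ) : ℝ :=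
  sSup {r | ∃ f : ℝ → ℝ, (∀ x, |f x| ≤ 1) ∧ LipschitzWith 1 f ∧
    r = (∫ x, f x ∂μ) - ∫ x, f x ∂ν}

/-- The distance `d₀` between two iterated function systems. -/
def dzero {k : ℕ} (S T : Fin k → ℝ → ℝ) (p q : Fin k → ℝ) : ℝ :=
  ∑ i : Fin k, (|p i - q i| + supOn (Icc (0 : ℝ) 1) (fun x => S i x - T i x))

/-- `g` is absolutely continuous on `[0,1]`. -/
def AbsCont (g : ℝ → ℝ) : Prop :=
  ∀ ε > 0, ∃ δ > 0, ∀ n : ℕ, ∀ a b : Fin n → ℝ,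
    (∀ i, 0 ≤ a i ∧ a i ≤ b i ∧ b i ≤ 1) →
    (Pairwise fun i j => Disjoint (Ioo (a i) (b i)) (Ioo (a j) (b j))) →
    ∑ i, (b i - a i) < δ → ∑ i, |g (b i) - g (a i)| < ε

/-- Membership in `M₁^ε`: some Borel subset of `[0,1]` of Lebesgue measure `< ε`
carries `μ`-mass `> 1 - ε/2`. -/
def MemM1eps (ε : ℝ) (μ : Measure ℝ) : Prop :=
  ∃ A : Set ℝ, MeasurableSet A ∧ A ⊆ Icc (0 : ℝ) 1 ∧
    volume A < ENNReal.ofReal ε ∧ ENNReal.ofReal (1 - ε / 2) < μ A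

/-- Clamping of a real number to `[0,1]`. -/
def clampI (x : ℝ) : ℝ := max 0 (min 1 x)

/-- A point of the space `F₀`: a `k`-tuple of homeomorphisms of `[0,1]` in `C⁺_β`
(together with their inverses) and a probability vector.  The maps are normalized
outside `[0,1]` by clamping, so that they are determined by their restrictions
to `[0,1]`. -/
structure Sys (β : ℝ) (k : ℕ) where
  g : Fin k → ℝ → ℝ
  ginv : Fin k → ℝ → ℝ
  p : Fin k → ℝ
  prob : ProbVec p
  cplus : ∀ i, CPlus β (g i)
  ginv_mapsTo : ∀ i, MapsTo (ginv i) (Icc (0 : ℝ) 1) (Icc (0 : ℝ) 1)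
  left_inv : ∀ i, ∀ x ∈ Icc (0 : ℝ) 1, ginv i (g i x) = x
  right_inv : ∀ i, ∀ y ∈ Icc (0 : ℝ) 1, g i (ginv i y) = y
  g_clamp : ∀ i x, g i x = g i (clampI x)
  ginv_clamp : ∀ i x, ginv i x = ginv i (clampI x)

/-- The metric `d` on the space of systems. -/
def dSys {β : ℝ} {k : ℕ} (A B : Sys β k) : ℝ :=
  ∑ i : Fin k,
    (|A.p i - B.p i|
      + supOn (Icc (0 : ℝ) 1) (fun x => A.g i x - B.g i x)
      + supOn (Icc (0 : ℝ) 1) (fun x => A.ginv i x - B.ginv i x)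
      + max
          (supOn (Icc (0 : ℝ) β)
            (fun x => derivWithin (A.g i) (Icc (0 : ℝ) β) x -
              derivWithin (B.g i) (Icc (0 : ℝ) β) x))
          (supOn (Icc (1 - β) 1)
            (fun x => derivWithin (A.g i) (Icc (1 - β) 1) x -
              derivWithin (B.g i) (Icc (1 - β) 1) x)))

/-- The set `F`: admissible systems all of whose maps are absolutely continuous. -/
def Fset (β : ℝ) (k : ℕ) : Set (Sys β k) :=
  {A | Admissible β A.g A.p ∧ ∀ i, AbsCont (A.g i)}

/-- Closure of a set of systems with respect to the metric `dSys`. -/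
def closureSys {β : ℝ} {k : ℕ} (S : Set (Sys β k)) : Set (Sys β k) :=
  {A | ∀ ε > 0, ∃ B ∈ S, dSys A B < ε}

/-- `S` is nowhere dense in the subspace `X` (with respect to `dSys`):
every ball centered in `X` contains a point of `X` some ball around which
misses `S ∩ X`. -/
def NowhereDenseIn {β : ℝ} {k : ℕ} (X S : Set (Sys β k)) : Prop :=
  ∀ A ∈ X, ∀ ε > 0, ∃ B ∈ X, dSys A B < ε ∧ ∃ δ > 0, ∀ C ∈ X ∩ S, δ ≤ dSys B C

/-- Cesàro averages `(ν + Pν + ⋯ + P^{n-1}ν)/n` of a measure under the Markov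
operator of an IFS. -/
def cesaro {k : ℕ} (g : Fin k → ℝ → ℝ) (p : Fin k → ℝ) (ν : Measure ℝ) (n : ℕ) :
    Measure ℝ :=
  (n : ENNReal)⁻¹ • ∑ j ∈ Finset.range n, (fun m => markovOp g p m)^[j] ν


namespace IFSErg

lemma clampI_mem (x : ℝ) : clampI x ∈ Icc (0:ℝ) 1 :=
  ⟨le_max_left _ _, max_le zero_le_one (min_le_left _ _)⟩

lemma clampI_of_mem {x : ℝ} (h : x ∈ Icc (0:ℝ) 1) : clampI x = x := by
  simp [clampI, min_eq_right h.2, max_eq_right h.1]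

lemma clampI_of_nonpos {x : ℝ} (h : x ≤ 0) : clampI x = 0 := by
  simp [clampI, min_eq_right (h.trans zero_le_one), max_eq_left h]

lemma clampI_of_one_le {x : ℝ} (h : 1 ≤ x) : clampI x = 1 := by
  simp [clampI, min_eq_left h, max_eq_right (zero_le_one : (0:ℝ) ≤ 1)]

lemma clampI_mono : Monotone clampI :=
  monotone_const.max (monotone_const.min monotone_id)

lemma clampI_continuous : Continuous clampI :=
  continuous_const.max (continuous_const.min continuous_id)

lemma clampI_nonneg (x : ℝ) : 0 ≤ clampI x := (clampI_mem x).1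
lemma clampI_le_one (x : ℝ) : clampI x ≤ 1 := (clampI_mem x).2

structure Setup (k : ℕ) where
  p : Fin k → ℝ
  G : Fin k → ℝ → ℝ
  τ : ℝ
  α : ℝ
  ρ : ℝ
  hp : ∀ i, 0 ≤ p i
  hps : ∑ i, p i = 1
  hGmem : ∀ i x, G i x ∈ Icc (0:ℝ) 1
  hGmono : ∀ i, Monotone (G i)
  hGcont : ∀ i, Continuous (G i)
  hG0 : ∀ i, ∀ x ≤ (0:ℝ), G i x = 0
  hG1 : ∀ i, ∀ x : ℝ, 1 ≤ x → G i x = 1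
  hτ0 : 0 < τ
  hτ2 : τ ≤ 1/2
  hα : 0 < α
  hρ0 : 0 ≤ ρ
  hρ1 : ρ < 1
  hA : ∀ u ∈ Ioc (0:ℝ) τ, ∑ i, p i * (G i u) ^ α ≤ ρ * u ^ α
  hB : ∀ u ∈ Ioc (0:ℝ) τ, ∑ i, p i * (1 - G i (1-u)) ^ α ≤ ρ * u ^ α

namespace Setup

variable {k : ℕ} (S : Setup k)

lemma hτ1 : S.τ ≤ 1 := S.hτ2.trans (by norm_num)

def M : ℝ := S.τ ^ (-S.α)

lemma hMτ : S.M * S.τ ^ S.α = 1 := by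
  rw [M, ← Real.rpow_add S.hτ0, neg_add_cancel, Real.rpow_zero]

lemma τα_pos : 0 < S.τ ^ S.α := Real.rpow_pos_of_pos S.hτ0 _

lemma hM0 : 0 < S.M := Real.rpow_pos_of_pos S.hτ0 _

lemma hM1 : 1 ≤ S.M := by
  have h1 : S.τ ^ S.α ≤ 1 := Real.rpow_le_one S.hτ0.le S.hτ1 S.hα.le
  nlinarith [S.hMτ, S.τα_pos, S.hM0]

lemma rpow_clamp_nonneg (x : ℝ) : 0 ≤ clampI x ^ S.α :=
  Real.rpow_nonneg (clampI_nonneg x) _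

/-- The dual (Koopman-type) operator acting on distribution functions. -/
def Top (F : ℝ → ℝ) : ℝ → ℝ := fun x => ∑ i, S.p i * F (S.G i x)

def phi (s : ℝ) : ℝ → ℝ := fun x => min 1 (s * (S.M * clampI x ^ S.α))

def psi : ℝ → ℝ := fun x => max 0 (1 - S.M * (1 - clampI x) ^ S.α)

lemma phi_nonneg {s : ℝ} (hs : 0 ≤ s) (x : ℝ) : 0 ≤ S.phi s x :=
  le_min zero_le_one (mul_nonneg hs (mul_nonneg S.hM0.le (S.rpow_clamp_nonneg x)))

lemma phi_le_one (s : ℝ) (x : ℝ) : S.phi s x ≤ 1 := min_le_left _ _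

lemma psi_nonneg (x : ℝ) : 0 ≤ S.psi x := le_max_left _ _

lemma psi_le_one (x : ℝ) : S.psi x ≤ 1 := by
  have h : 0 ≤ S.M * (1 - clampI x) ^ S.α :=
    mul_nonneg S.hM0.le (Real.rpow_nonneg (by linarith [clampI_le_one x]) _)
  exact max_le zero_le_one (by linarith)

lemma phi_mono {s : ℝ} (hs : 0 ≤ s) : Monotone (S.phi s) := by
  intro x y hxy
  refine min_le_min le_rfl ?_
  have h : clampI x ^ S.α ≤ clampI y ^ S.α :=
    Real.rpow_le_rpow (clampI_nonneg x) (clampI_mono hxy) S.hα.le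
  exact mul_le_mul_of_nonneg_left (mul_le_mul_of_nonneg_left h S.hM0.le) hs

lemma psi_mono : Monotone S.psi := by
  intro x y hxy
  refine max_le_max le_rfl ?_
  have h1 : (1 - clampI y) ^ S.α ≤ (1 - clampI x) ^ S.α :=
    Real.rpow_le_rpow (by linarith [clampI_le_one y]) (by linarith [clampI_mono hxy]) S.hα.le
  have := mul_le_mul_of_nonneg_left h1 S.hM0.le
  linarith

lemma continuous_rpow_α : Continuous (fun u : ℝ => u ^ S.α) := by
  rw [continuous_iff_continuousAt]
  intro u
  rcases eq_or_ne u 0 with h | h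
  · subst h; exact Real.continuousAt_rpow_const 0 S.α (Or.inr S.hα.le)
  · exact Real.continuousAt_rpow_const u S.α (Or.inl h)

lemma phi_cont (s : ℝ) : Continuous (S.phi s) := by
  refine continuous_const.min (continuous_const.mul (continuous_const.mul ?_))
  exact S.continuous_rpow_α.comp clampI_continuous

lemma psi_cont : Continuous S.psi := by
  refine continuous_const.max (continuous_const.sub (continuous_const.mul ?_))
  exact S.continuous_rpow_α.comp (continuous_const.sub clampI_continuous)

lemma zero_rpow_α : (0:ℝ) ^ S.α = 0 := Real.zero_rpow S.hα.ne'

lemma phi_of_nonpos {s x : ℝ} (hx : x ≤ 0) : S.phi s x = 0 := by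
  simp [phi, clampI_of_nonpos hx, S.zero_rpow_α, min_eq_right (zero_le_one : (0:ℝ) ≤ 1)]

lemma phi_of_one_le {s x : ℝ} (hs : 1 ≤ s) (hx : 1 ≤ x) : S.phi s x = 1 := by
  have h : (1:ℝ) ≤ s * (S.M * (1:ℝ) ^ S.α) := by
    rw [Real.one_rpow, mul_one]
    nlinarith [S.hM1]
  simp only [phi, clampI_of_one_le hx]
  exact min_eq_left h

lemma psi_of_one_le {x : ℝ} (hx : 1 ≤ x) : S.psi x = 1 := by
  simp [psi, clampI_of_one_le hx, S.zero_rpow_α]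

lemma phi_mono_s {s s' : ℝ} (hss : s ≤ s') : S.phi s ≤ S.phi s' := by
  intro x
  refine min_le_min le_rfl ?_
  exact mul_le_mul_of_nonneg_right hss (mul_nonneg S.hM0.le (S.rpow_clamp_nonneg x))

lemma psi_le_phi_one : S.psi ≤ S.phi 1 := by
  intro x
  set u := clampI x with hu
  rcases le_or_gt S.τ u with h | h
  · have h1 : (1:ℝ) ≤ 1 * (S.M * u ^ S.α) := by
      have : S.τ ^ S.α ≤ u ^ S.α := Real.rpow_le_rpow S.hτ0.le h S.hα.le
      nlinarith [S.hMτ, S.hM0]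
    calc S.psi x ≤ 1 := S.psi_le_one x
    _ = S.phi 1 x := by rw [phi, ← hu, min_eq_left h1]
  · have h2 : (1:ℝ) ≤ S.M * (1 - u) ^ S.α := by
      have hτu : S.τ ≤ 1 - u := by
        have := S.hτ2; linarith
      have : S.τ ^ S.α ≤ (1 - u) ^ S.α := Real.rpow_le_rpow S.hτ0.le hτu S.hα.le
      nlinarith [S.hMτ, S.hM0]
    have : S.psi x = 0 := by
      rw [psi, ← hu, max_eq_left (by linarith)]
    rw [this]
    exact S.phi_nonneg zero_le_one x

lemma Top_le_Top {F F' : ℝ → ℝ} (h : F ≤ F') : S.Top F ≤ S.Top F' := by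
  intro x
  exact Finset.sum_le_sum fun i _ => mul_le_mul_of_nonneg_left (h _) (S.hp i)

lemma Top_nonneg {F : ℝ → ℝ} (h : ∀ y, 0 ≤ F y) (x : ℝ) : 0 ≤ S.Top F x :=
  Finset.sum_nonneg fun i _ => mul_nonneg (S.hp i) (h _)

lemma Top_le_one {F : ℝ → ℝ} (h : ∀ y, F y ≤ 1) (x : ℝ) : S.Top F x ≤ 1 := by
  calc S.Top F x ≤ ∑ i, S.p i := Finset.sum_le_sum fun i _ => by
        have := h (S.G i x); have := S.hp i; nlinarith
  _ = 1 := S.hps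

lemma Top_monotone {F : ℝ → ℝ} (h : Monotone F) : Monotone (S.Top F) := by
  intro x y hxy
  exact Finset.sum_le_sum fun i _ =>
    mul_le_mul_of_nonneg_left (h (S.hGmono i hxy)) (S.hp i)

lemma Top_continuous {F : ℝ → ℝ} (h : Continuous F) : Continuous (S.Top F) := by
  refine continuous_finset_sum _ fun i _ => continuous_const.mul (h.comp (S.hGcont i))

lemma Top_of_nonpos {F : ℝ → ℝ} (h : F 0 = 0) {x : ℝ} (hx : x ≤ 0) : S.Top F x = 0 := by
  unfold Top
  rw [Finset.sum_eq_zero]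
  intro i _
  rw [S.hG0 i x hx, h, mul_zero]

lemma Top_of_one_le {F : ℝ → ℝ} (h : F 1 = 1) {x : ℝ} (hx : 1 ≤ x) : S.Top F x = 1 := by
  unfold Top
  calc ∑ i, S.p i * F (S.G i x) = ∑ i, S.p i := by
        refine Finset.sum_congr rfl fun i _ => ?_
        rw [S.hG1 i x hx, h, mul_one]
  _ = 1 := S.hps

lemma hGclamp (i : Fin k) (x : ℝ) : S.G i x = S.G i (clampI x) := by
  rcases le_or_gt x 0 with h | h
  · rw [S.hG0 i x h, clampI_of_nonpos h, S.hG0 i 0 le_rfl]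
  rcases le_or_gt 1 x with h1 | h1
  · rw [S.hG1 i x h1, clampI_of_one_le h1, S.hG1 i 1 le_rfl]
  · rw [clampI_of_mem ⟨h.le, h1.le⟩]


lemma Top_phi {s : ℝ} (hs : 1 ≤ s) : S.Top (S.phi s) ≤ S.phi (max 1 (S.ρ * s)) := by
  intro x
  have hs0 : (0:ℝ) ≤ s := zero_le_one.trans hs
  set u := clampI x with hu
  have hGx : ∀ i : Fin k, S.G i x = S.G i u := fun i => S.hGclamp i x
  have hphiu : S.phi (max 1 (S.ρ * s)) x = S.phi (max 1 (S.ρ * s)) u := by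
    simp only [phi, ← hu, clampI_of_mem (clampI_mem x)]
    rw [show clampI u = u from clampI_of_mem (clampI_mem x)]
  rw [hphiu]
  have humem := clampI_mem x
  rcases eq_or_lt_of_le humem.1 with h0 | h0
  · -- u = 0
    have : S.Top (S.phi s) x = 0 := by
      unfold Top
      rw [Finset.sum_eq_zero]
      intro i _
      rw [hGx i, S.hG0 i u h0.symm.le, S.phi_of_nonpos le_rfl, mul_zero]
    rw [this]
    exact S.phi_nonneg (le_trans zero_le_one (le_max_left _ _)) u
  rcases le_or_gt u S.τ with huτ | huτ
  · -- main case : 0 < u ≤ τ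
    have hb1 : S.Top (S.phi s) x ≤ 1 := S.Top_le_one (S.phi_le_one s) x
    have hb2 : S.Top (S.phi s) x ≤ s * (S.M * (S.ρ * u ^ S.α)) := by
      unfold Top
      calc ∑ i, S.p i * S.phi s (S.G i x)
          ≤ ∑ i, S.p i * (s * (S.M * (S.G i u) ^ S.α)) := by
            refine Finset.sum_le_sum fun i _ => ?_
            rw [hGx i]
            refine mul_le_mul_of_nonneg_left ?_ (S.hp i)
            calc S.phi s (S.G i u) ≤ s * (S.M * clampI (S.G i u) ^ S.α) := min_le_right _ _
            _ = s * (S.M * (S.G i u) ^ S.α) := by rw [clampI_of_mem (S.hGmem i u)]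
      _ = s * S.M * ∑ i, S.p i * (S.G i u) ^ S.α := by
            rw [Finset.mul_sum]; refine Finset.sum_congr rfl fun i _ => by ring
      _ ≤ s * S.M * (S.ρ * u ^ S.α) := by
            refine mul_le_mul_of_nonneg_left (S.hA u ⟨h0, huτ⟩) ?_
            exact mul_nonneg hs0 S.hM0.le
      _ = s * (S.M * (S.ρ * u ^ S.α)) := by ring
    refine le_min hb1 ?_
    calc S.Top (S.phi s) x ≤ s * (S.M * (S.ρ * u ^ S.α)) := hb2
    _ = (S.ρ * s) * (S.M * u ^ S.α) := by ring
    _ ≤ max 1 (S.ρ * s) * (S.M * u ^ S.α) := by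
          refine mul_le_mul_of_nonneg_right (le_max_right _ _) ?_
          refine mul_nonneg S.hM0.le (Real.rpow_nonneg humem.1 _)
    _ = max 1 (S.ρ * s) * (S.M * clampI u ^ S.α) := by rw [clampI_of_mem humem]
  · -- u > τ
    have h1 : (1:ℝ) ≤ max 1 (S.ρ * s) * (S.M * clampI u ^ S.α) := by
      rw [clampI_of_mem humem]
      have h2 : S.τ ^ S.α ≤ u ^ S.α := Real.rpow_le_rpow S.hτ0.le huτ.le S.hα.le
      have h3 : (1:ℝ) ≤ S.M * u ^ S.α := by nlinarith [S.hMτ, S.hM0]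
      nlinarith [le_max_left (1:ℝ) (S.ρ * s), h3]
    calc S.Top (S.phi s) x ≤ 1 := S.Top_le_one (S.phi_le_one s) x
    _ ≤ _ := by rw [phi]; exact le_min le_rfl h1

lemma Top_psi : S.psi ≤ S.Top S.psi := by
  intro x
  set u := clampI x with hu
  have hGx : ∀ i : Fin k, S.G i x = S.G i u := fun i => S.hGclamp i x
  have humem := clampI_mem x
  have hpsiu : S.psi x = S.psi u := by
    simp only [psi, ← hu, clampI_of_mem (clampI_mem x)]
    rw [show clampI u = u from clampI_of_mem (clampI_mem x)]
  rw [hpsiu]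
  rcases eq_or_lt_of_le humem.2 with h1 | h1
  · -- u = 1
    have : S.Top S.psi x = 1 := by
      unfold Top
      calc ∑ i, S.p i * S.psi (S.G i x) = ∑ i, S.p i := by
            refine Finset.sum_congr rfl fun i _ => ?_
            rw [hGx i, S.hG1 i u h1.ge, S.psi_of_one_le le_rfl, mul_one]
      _ = 1 := S.hps
    rw [this]
    exact S.psi_le_one u
  rcases lt_or_ge (1 - u) S.τ with huτ | huτ
  · -- main case: 1 - u ∈ (0, τ)
    set v := 1 - u with hv
    have hv0 : 0 < v := by simp [hv]; linarith
    have key := S.hB v ⟨hv0, huτ.le⟩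
    have huv : (1:ℝ) - v = u := by simp [hv]
    rw [huv] at key
    have step : 1 - S.M * (S.ρ * v ^ S.α) ≤ S.Top S.psi x := by
      unfold Top
      calc 1 - S.M * (S.ρ * v ^ S.α)
          ≤ 1 - S.M * ∑ i, S.p i * (1 - S.G i u) ^ S.α := by
            have := mul_le_mul_of_nonneg_left key S.hM0.le
            linarith
      _ = ∑ i, S.p i * (1 - S.M * (1 - S.G i u) ^ S.α) := by
            rw [Finset.mul_sum]
            have : ∑ i, S.p i * (1 - S.M * (1 - S.G i u) ^ S.α)
                = ∑ i, (S.p i - S.M * (S.p i * (1 - S.G i u) ^ S.α)) := by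
              refine Finset.sum_congr rfl fun i _ => by ring
            rw [this, Finset.sum_sub_distrib, S.hps]
      _ ≤ ∑ i, S.p i * S.psi (S.G i x) := by
            refine Finset.sum_le_sum fun i _ => ?_
            refine mul_le_mul_of_nonneg_left ?_ (S.hp i)
            rw [hGx i]
            calc 1 - S.M * (1 - S.G i u) ^ S.α
                = 1 - S.M * (1 - clampI (S.G i u)) ^ S.α := by
                  rw [clampI_of_mem (S.hGmem i u)]
            _ ≤ S.psi (S.G i u) := le_max_right _ _
    have hρv : 1 - S.M * v ^ S.α ≤ 1 - S.M * (S.ρ * v ^ S.α) := by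
      have hvα : 0 ≤ v ^ S.α := Real.rpow_nonneg hv0.le _
      nlinarith [mul_nonneg (mul_nonneg S.hM0.le hvα) (sub_nonneg.mpr S.hρ1.le)]
    have hpu : S.psi u = max 0 (1 - S.M * v ^ S.α) := by
      rw [psi, clampI_of_mem humem]
    rw [hpu]
    refine max_le (S.Top_nonneg S.psi_nonneg x) (by linarith)
  · -- 1 - u ≥ τ : psi u = 0
    have h2 : S.τ ^ S.α ≤ (1 - u) ^ S.α := Real.rpow_le_rpow S.hτ0.le huτ S.hα.le
    have h3 : (1:ℝ) ≤ S.M * (1 - u) ^ S.α := by nlinarith [S.hMτ, S.hM0]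
    have : S.psi u = 0 := by
      rw [psi, clampI_of_mem humem]
      exact max_eq_left (by linarith)
    rw [this]
    exact S.Top_nonneg S.psi_nonneg x

/-- Iterates of the dual operator started from the upper envelope. -/
def Fseq (n : ℕ) : ℝ → ℝ := S.Top^[n] (S.phi 1)

lemma Fseq_zero : S.Fseq 0 = S.phi 1 := rfl

lemma Fseq_succ (n : ℕ) : S.Fseq (n + 1) = S.Top (S.Fseq n) :=
  Function.iterate_succ_apply' _ _ _

lemma Fseq_nonneg (n : ℕ) : ∀ x, 0 ≤ S.Fseq n x := by
  induction n with
  | zero => exact S.phi_nonneg zero_le_one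
  | succ n ih => rw [Fseq_succ]; exact fun x => S.Top_nonneg ih x

lemma Fseq_le_one (n : ℕ) : ∀ x, S.Fseq n x ≤ 1 := by
  induction n with
  | zero => exact S.phi_le_one 1
  | succ n ih => rw [Fseq_succ]; exact fun x => S.Top_le_one ih x

lemma Fseq_monotone (n : ℕ) : Monotone (S.Fseq n) := by
  induction n with
  | zero => exact S.phi_mono zero_le_one
  | succ n ih => rw [Fseq_succ]; exact S.Top_monotone ih

lemma Fseq_continuous (n : ℕ) : Continuous (S.Fseq n) := by
  induction n with
  | zero => exact S.phi_cont 1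
  | succ n ih => rw [Fseq_succ]; exact S.Top_continuous ih

lemma Fseq_of_nonpos (n : ℕ) {x : ℝ} (hx : x ≤ 0) : S.Fseq n x = 0 := by
  induction n generalizing x with
  | zero => exact S.phi_of_nonpos hx
  | succ n ih => rw [Fseq_succ]; exact S.Top_of_nonpos (ih le_rfl) hx

lemma Fseq_of_one_le (n : ℕ) {x : ℝ} (hx : 1 ≤ x) : S.Fseq n x = 1 := by
  induction n generalizing x with
  | zero => exact S.phi_of_one_le le_rfl hx
  | succ n ih => rw [Fseq_succ]; exact S.Top_of_one_le (ih le_rfl) hx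

lemma Top_phi_one_le : S.Top (S.phi 1) ≤ S.phi 1 := by
  have h := S.Top_phi le_rfl
  have : max 1 (S.ρ * 1) = 1 := by
    rw [mul_one]; exact max_eq_left S.hρ1.le
  rwa [this] at h

lemma Fseq_antitone : ∀ n, S.Fseq (n + 1) ≤ S.Fseq n := by
  intro n
  induction n with
  | zero => rw [Fseq_succ, Fseq_zero]; exact S.Top_phi_one_le
  | succ n ih =>
    calc S.Fseq (n + 2) = S.Top (S.Fseq (n + 1)) := S.Fseq_succ (n + 1)
    _ ≤ S.Top (S.Fseq n) := S.Top_le_Top ih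
    _ = S.Fseq (n + 1) := (S.Fseq_succ n).symm

lemma Fseq_antitone' : ∀ {m n}, m ≤ n → S.Fseq n ≤ S.Fseq m := by
  intro m n h
  induction n with
  | zero => rw [Nat.le_zero.mp h]
  | succ n ih =>
    rcases Nat.lt_or_ge m (n+1) with h' | h'
    · exact le_trans (S.Fseq_antitone n) (ih (Nat.lt_succ_iff.mp h'))
    · rw [le_antisymm h h']

lemma psi_le_Fseq (n : ℕ) : S.psi ≤ S.Fseq n := by
  induction n with
  | zero => exact S.psi_le_phi_one
  | succ n ih =>
    rw [Fseq_succ]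
    exact le_trans S.Top_psi (S.Top_le_Top ih)

/-- The maximal fixed point of the dual operator. -/
def Fmax : ℝ → ℝ := fun x => ⨅ n, S.Fseq n x

lemma Fseq_bddBelow (x : ℝ) : BddBelow (range fun n => S.Fseq n x) :=
  ⟨0, by rintro y ⟨n, rfl⟩; exact S.Fseq_nonneg n x⟩

lemma Fmax_le_Fseq (n : ℕ) (x : ℝ) : S.Fmax x ≤ S.Fseq n x :=
  ciInf_le (S.Fseq_bddBelow x) n

lemma Fmax_nonneg (x : ℝ) : 0 ≤ S.Fmax x :=
  le_ciInf fun n => S.Fseq_nonneg n x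

lemma Fmax_le_one (x : ℝ) : S.Fmax x ≤ 1 :=
  (S.Fmax_le_Fseq 0 x).trans (S.phi_le_one 1 x)

lemma psi_le_Fmax (x : ℝ) : S.psi x ≤ S.Fmax x :=
  le_ciInf fun n => S.psi_le_Fseq n x

lemma Fmax_monotone : Monotone S.Fmax := by
  intro x y hxy
  exact le_ciInf fun n => (S.Fmax_le_Fseq n x).trans (S.Fseq_monotone n hxy)

lemma Fmax_of_nonpos {x : ℝ} (hx : x ≤ 0) : S.Fmax x = 0 :=
  le_antisymm (by rw [← S.Fseq_of_nonpos 0 hx]; exact S.Fmax_le_Fseq 0 x) (S.Fmax_nonneg x)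

lemma Fmax_of_one_le {x : ℝ} (hx : 1 ≤ x) : S.Fmax x = 1 := by
  refine le_antisymm (S.Fmax_le_one x) (le_ciInf fun n => ?_)
  rw [S.Fseq_of_one_le n hx]

lemma Fseq_tendsto (x : ℝ) : Tendsto (fun n => S.Fseq n x) atTop (𝓝 (S.Fmax x)) :=
  tendsto_atTop_ciInf (fun m n h => S.Fseq_antitone' h x) (S.Fseq_bddBelow x)

lemma Top_Fmax : S.Top S.Fmax = S.Fmax := by
  funext x
  have h1 : Tendsto (fun n => S.Fseq (n + 1) x) atTop (𝓝 (S.Fmax x)) :=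
    (S.Fseq_tendsto x).comp (tendsto_add_atTop_nat 1)
  have h2 : Tendsto (fun n => S.Fseq (n + 1) x) atTop (𝓝 (S.Top S.Fmax x)) := by
    have : ∀ n, S.Fseq (n + 1) x = ∑ i, S.p i * S.Fseq n (S.G i x) := by
      intro n; rw [Fseq_succ]; rfl
    simp only [this]
    unfold Top
    exact tendsto_finset_sum _ fun i _ =>
      (tendsto_const_nhds.mul (S.Fseq_tendsto (S.G i x)))
  exact tendsto_nhds_unique h2 h1

lemma Fmax_rightContinuous (x : ℝ) : ContinuousWithinAt S.Fmax (Ici x) x := by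
  rw [Metric.continuousWithinAt_iff]
  intro ε hε
  have h : S.Fmax x < S.Fmax x + ε / 2 := by linarith
  obtain ⟨n, hn⟩ : ∃ n, S.Fseq n x < S.Fmax x + ε / 2 := exists_lt_of_ciInf_lt h
  have hc : ContinuousAt (S.Fseq n) x := (S.Fseq_continuous n).continuousAt
  rw [Metric.continuousAt_iff] at hc
  obtain ⟨δ, hδ0, hδ⟩ := hc (ε / 2) (by linarith)
  refine ⟨δ, hδ0, fun {y} hy hyd => ?_⟩
  have h1 : S.Fmax x ≤ S.Fmax y := S.Fmax_monotone hy
  have h2 : S.Fmax y ≤ S.Fseq n y := S.Fmax_le_Fseq n y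
  have h3 : |S.Fseq n y - S.Fseq n x| < ε / 2 := hδ hyd
  rw [Real.dist_eq] at *
  rw [abs_lt] at h3 ⊢
  constructor <;> nlinarith [abs_nonneg (S.Fseq n y - S.Fseq n x)]

/-- Every fixed point of the dual operator dominated by some envelope `phi s`
is dominated by `Fmax`. -/
lemma le_Fmax {H : ℝ → ℝ} (hfix : S.Top H = H) {s : ℝ} (hs : 1 ≤ s)
    (hHs : H ≤ S.phi s) : H ≤ S.Fmax := by
  have hstep : ∀ n : ℕ, H ≤ S.phi (max 1 (S.ρ ^ n * s)) := by
    intro n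
    induction n with
    | zero => simpa using le_trans hHs (S.phi_mono_s (le_max_right 1 s))
    | succ n ih =>
      calc H = S.Top H := hfix.symm
      _ ≤ S.Top (S.phi (max 1 (S.ρ ^ n * s))) := S.Top_le_Top ih
      _ ≤ S.phi (max 1 (S.ρ * max 1 (S.ρ ^ n * s))) := S.Top_phi (le_max_left _ _)
      _ ≤ S.phi (max 1 (S.ρ ^ (n+1) * s)) := by
          refine S.phi_mono_s (max_le (le_max_left _ _) ?_)
          rcases le_or_gt (S.ρ ^ n * s) 1 with h | h
          · rw [max_eq_left h]
            calc S.ρ * 1 = S.ρ := mul_one _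
            _ ≤ 1 := S.hρ1.le
            _ ≤ max 1 (S.ρ ^ (n+1) * s) := le_max_left _ _
          · rw [max_eq_right h.le]
            calc S.ρ * (S.ρ ^ n * s) = S.ρ ^ (n+1) * s := by ring
            _ ≤ max 1 (S.ρ ^ (n+1) * s) := le_max_right _ _
  obtain ⟨n, hn⟩ : ∃ n : ℕ, S.ρ ^ n * s ≤ 1 := by
    have hs0 : 0 < s := lt_of_lt_of_le zero_lt_one hs
    obtain ⟨n, hn⟩ := exists_pow_lt_of_lt_one (show (0:ℝ) < 1 / s by positivity) S.hρ1
    exact ⟨n, by rw [← le_div_iff₀ hs0]; exact hn.le⟩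
  have hH1 : H ≤ S.phi 1 := by
    have := hstep n
    rwa [max_eq_left hn] at this
  have hind : ∀ m : ℕ, H ≤ S.Fseq m := by
    intro m
    induction m with
    | zero => exact hH1
    | succ m ih =>
      rw [Fseq_succ, ← hfix]
      exact S.Top_le_Top ih
  intro x
  exact le_ciInf fun m => hind m x

/-- `Fmax` as a Stieltjes function. -/
def FS : StieltjesFunction ℝ :=
  ⟨S.Fmax, S.Fmax_monotone, S.Fmax_rightContinuous⟩

lemma FS_apply (x : ℝ) : S.FS x = S.Fmax x := rfl

lemma FS_tendsto_atBot : Tendsto S.FS atBot (𝓝 0) := by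
  refine Tendsto.congr' ?_ (tendsto_const_nhds (α := ℝ) (f := atBot))
  filter_upwards [eventually_le_atBot (0:ℝ)] with x hx
  exact (S.Fmax_of_nonpos hx).symm

lemma FS_tendsto_atTop : Tendsto S.FS atTop (𝓝 1) := by
  refine Tendsto.congr' ?_ (tendsto_const_nhds (α := ℝ) (f := atTop))
  filter_upwards [eventually_ge_atTop (1:ℝ)] with x hx
  exact (S.Fmax_of_one_le hx).symm

/-- The invariant measure. -/
def mu : Measure ℝ := S.FS.measure

lemma mu_Iic (x : ℝ) : S.mu (Iic x) = ENNReal.ofReal (S.Fmax x) := by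
  rw [mu, S.FS.measure_Iic S.FS_tendsto_atBot x, sub_zero]; rfl

lemma mu_prob : IsProbabilityMeasure S.mu := by
  constructor
  rw [mu, S.FS.measure_univ S.FS_tendsto_atBot S.FS_tendsto_atTop]
  simp

lemma leftLim_Fmax_one : Function.leftLim S.Fmax 1 = 1 := by
  have hle : Function.leftLim S.Fmax 1 ≤ 1 := by
    have := S.Fmax_monotone.leftLim_le (le_refl (1:ℝ))
    rwa [S.Fmax_of_one_le le_rfl] at this
  have hge : (1:ℝ) ≤ Function.leftLim S.Fmax 1 := by
    have hψ : Tendsto S.psi (𝓝[<] (1:ℝ)) (𝓝 1) := by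
      have := (S.psi_cont.tendsto 1).mono_left (nhdsWithin_le_nhds (s := Iio (1:ℝ)))
      rwa [S.psi_of_one_le le_rfl] at this
    refine le_of_tendsto hψ ?_
    filter_upwards [self_mem_nhdsWithin] with y hy
    exact (S.psi_le_Fmax y).trans (S.Fmax_monotone.le_leftLim hy)
  linarith

lemma mu_Ioo : S.mu (Ioo 0 1) = 1 := by
  rw [mu, S.FS.measure_Ioo]
  have : S.FS 0 = 0 := S.Fmax_of_nonpos le_rfl
  rw [show Function.leftLim S.FS.toFun 1 = 1 from S.leftLim_Fmax_one, this]
  norm_num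

lemma mu_Iic_zero : S.mu (Iic 0) = 0 := by
  rw [S.mu_Iic, S.Fmax_of_nonpos le_rfl]; simp

lemma mu_Ioi_one : S.mu (Ioi 1) = 0 := by
  haveI := S.mu_prob
  have h := measure_compl (μ := S.mu) measurableSet_Iic (measure_ne_top _ (Iic (1:ℝ)))
  rw [compl_Iic, S.mu_Iic, S.Fmax_of_one_le le_rfl] at h
  simp at h
  exact h

lemma mu_singleton_one : S.mu {1} = 0 := by
  rw [mu, S.FS.measure_singleton]
  rw [show Function.leftLim S.FS.toFun 1 = 1 from S.leftLim_Fmax_one,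
    show S.FS 1 = 1 from S.Fmax_of_one_le le_rfl]
  simp

end Setup

/-! ### Glue between the Markov operator and the dual CDF operator -/

lemma markovOp_apply {k : ℕ} (g : Fin k → ℝ → ℝ) (p : Fin k → ℝ)
    (hmeas : ∀ i, Measurable (g i)) (ν : Measure ℝ) {A : Set ℝ} (hA : MeasurableSet A) :
    markovOp g p ν A = ∑ i, ENNReal.ofReal (p i) * ν (g i ⁻¹' A) := by
  rw [markovOp, Measure.finset_sum_apply]
  exact Finset.sum_congr rfl fun i _ => by
    rw [Measure.smul_apply, Measure.map_apply (hmeas i) hA, smul_eq_mul]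

lemma markovOp_univ {k : ℕ} (g : Fin k → ℝ → ℝ) (p : Fin k → ℝ)
    (hmeas : ∀ i, Measurable (g i)) (hp : ∀ i, 0 ≤ p i) (hps : ∑ i, p i = 1)
    (ν : Measure ℝ) (hν : IsProbabilityMeasure ν) :
    markovOp g p ν univ = 1 := by
  rw [markovOp_apply g p hmeas ν MeasurableSet.univ]
  simp only [preimage_univ, measure_univ, mul_one]
  rw [← ENNReal.ofReal_sum_of_nonneg (fun i _ => hp i), hps, ENNReal.ofReal_one]

lemma Ioo_full {ν : Measure ℝ} (hν : IsProbabilityMeasure ν)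
    (h0 : ν (Iic 0) = 0) (h1 : ν {1} = 0) (h2 : ν (Ioi 1) = 0) :
    ν (Ioo (0:ℝ) 1) = 1 := by
  have hsub : (Ioo (0:ℝ) 1)ᶜ ⊆ Iic 0 ∪ ({1} ∪ Ioi 1) := by
    intro y hy
    simp only [mem_compl_iff, mem_Ioo, not_and, not_lt] at hy
    simp only [mem_union, mem_Iic, mem_singleton_iff, mem_Ioi]
    rcases le_or_gt y 0 with h | h
    · exact Or.inl h
    · have := hy h
      rcases eq_or_lt_of_le this with h' | h'
      · exact Or.inr (Or.inl h'.symm)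
      · exact Or.inr (Or.inr h')
  have hc : ν (Ioo (0:ℝ) 1)ᶜ = 0 := by
    refine le_antisymm ?_ zero_le
    calc ν (Ioo (0:ℝ) 1)ᶜ ≤ ν (Iic 0 ∪ ({1} ∪ Ioi 1)) := measure_mono hsub
    _ ≤ ν (Iic 0) + ν ({1} ∪ Ioi 1) := measure_union_le _ _
    _ ≤ ν (Iic 0) + (ν {1} + ν (Ioi 1)) := by
        exact add_le_add le_rfl (measure_union_le _ _)
    _ = 0 := by rw [h0, h1, h2]; simp
  have := measure_compl (μ := ν) (s := Ioo (0:ℝ) 1) measurableSet_Ioo (measure_ne_top _ _)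
  rw [hc, measure_univ] at this
  have hle : ν (Ioo (0:ℝ) 1) ≤ 1 := by
    rw [← measure_univ (μ := ν)]; exact measure_mono (subset_univ _)
  exact le_antisymm hle (tsub_eq_zero_iff_le.mp this.symm)

lemma markov_Iic {k : ℕ} (g : Fin k → ℝ → ℝ) (p : Fin k → ℝ)
    (hmeas : ∀ i, Measurable (g i)) (G : Fin k → ℝ → ℝ)
    (hiff : ∀ i, ∀ y ∈ Ioo (0:ℝ) 1, ∀ x : ℝ, (g i y ≤ x ↔ y ≤ G i x))
    (ν : Measure ℝ) (hprob : IsProbabilityMeasure ν) (hν : ν (Ioo 0 1) = 1) (x : ℝ) :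
    markovOp g p ν (Iic x) = ∑ i, ENNReal.ofReal (p i) * ν (Iic (G i x)) := by
  rw [markovOp_apply g p hmeas ν measurableSet_Iic]
  refine Finset.sum_congr rfl fun i _ => ?_
  congr 1
  have hcompl : ν (Ioo (0:ℝ) 1)ᶜ = 0 := by
    have := measure_compl (μ := ν) (s := Ioo (0:ℝ) 1) measurableSet_Ioo (measure_ne_top _ _)
    rw [hν, measure_univ] at this
    simpa using this
  calc ν (g i ⁻¹' Iic x) = ν ((g i ⁻¹' Iic x) ∩ Ioo 0 1) := (measure_inter_conull hcompl).symm
  _ = ν ((Iic (G i x)) ∩ Ioo 0 1) := by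
      congr 1
      ext y
      simp only [mem_inter_iff, mem_preimage, mem_Iic]
      exact and_congr_left fun hy => hiff i y hy x
  _ = ν (Iic (G i x)) := measure_inter_conull hcompl

namespace Setup

variable {k : ℕ} (S : Setup k)

/-- Invariance of a CDF under the dual operator, from invariance of the measure. -/
lemma cdf_fixed (g : Fin k → ℝ → ℝ) (hmeas : ∀ i, Measurable (g i))
    (hiff : ∀ i, ∀ y ∈ Ioo (0:ℝ) 1, ∀ x : ℝ, (g i y ≤ x ↔ y ≤ S.G i x))
    (ν : Measure ℝ) (hprob : IsProbabilityMeasure ν) (hν : ν (Ioo 0 1) = 1)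
    (hinv : markovOp g S.p ν = ν) :
    S.Top (fun x => (ν (Iic x)).toReal) = fun x => (ν (Iic x)).toReal := by
  funext x
  have h := markov_Iic g S.p hmeas S.G hiff ν hprob hν x
  rw [hinv] at h
  calc S.Top (fun x => (ν (Iic x)).toReal) x
      = ∑ i, (ENNReal.ofReal (S.p i) * ν (Iic (S.G i x))).toReal := by
        refine Finset.sum_congr rfl fun i _ => ?_
        rw [ENNReal.toReal_mul, ENNReal.toReal_ofReal (S.hp i)]
  _ = (∑ i, ENNReal.ofReal (S.p i) * ν (Iic (S.G i x))).toReal := by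
        rw [ENNReal.toReal_sum]
        intro i _
        exact ENNReal.mul_ne_top ENNReal.ofReal_ne_top (measure_ne_top _ _)
  _ = (ν (Iic x)).toReal := by rw [← h]

/-- The constructed measure is invariant. -/
lemma mu_invariant (g : Fin k → ℝ → ℝ) (hmeas : ∀ i, Measurable (g i))
    (hiff : ∀ i, ∀ y ∈ Ioo (0:ℝ) 1, ∀ x : ℝ, (g i y ≤ x ↔ y ≤ S.G i x)) :
    markovOp g S.p S.mu = S.mu := by
  haveI := S.mu_prob
  haveI : IsFiniteMeasure (markovOp g S.p S.mu) :=
    ⟨by rw [markovOp_univ g S.p hmeas S.hp S.hps S.mu S.mu_prob]; exact ENNReal.one_lt_top⟩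
  refine Measure.ext_of_Iic (markovOp g S.p S.mu) S.mu fun a => ?_
  rw [markov_Iic g S.p hmeas S.G hiff S.mu S.mu_prob S.mu_Ioo a]
  calc ∑ i, ENNReal.ofReal (S.p i) * S.mu (Iic (S.G i a))
      = ∑ i, ENNReal.ofReal (S.p i * S.Fmax (S.G i a)) := by
        refine Finset.sum_congr rfl fun i _ => ?_
        rw [S.mu_Iic, ENNReal.ofReal_mul (S.hp i)]
  _ = ENNReal.ofReal (∑ i, S.p i * S.Fmax (S.G i a)) := by
        rw [ENNReal.ofReal_sum_of_nonneg]
        intro i _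
        exact mul_nonneg (S.hp i) (S.Fmax_nonneg _)
  _ = ENNReal.ofReal (S.Top S.Fmax a) := rfl
  _ = ENNReal.ofReal (S.Fmax a) := by rw [S.Top_Fmax]
  _ = S.mu (Iic a) := (S.mu_Iic a).symm

/-- The CDF of any invariant probability component dominated by `mu/t`
is dominated by `Fmax`. -/
lemma component_le_Fmax (g : Fin k → ℝ → ℝ) (hmeas : ∀ i, Measurable (g i))
    (hiff : ∀ i, ∀ y ∈ Ioo (0:ℝ) 1, ∀ x : ℝ, (g i y ≤ x ↔ y ≤ S.G i x))
    (ν : Measure ℝ) (hprob : IsProbabilityMeasure ν) (hν : ν (Ioo 0 1) = 1)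
    (hinv : markovOp g S.p ν = ν) {t : ℝ} (ht : 0 < t)
    (hle : ∀ x : ℝ, ENNReal.ofReal t * ν (Iic x) ≤ S.mu (Iic x)) :
    ∀ x : ℝ, (ν (Iic x)).toReal ≤ S.Fmax x := by
  set F : ℝ → ℝ := fun x => (ν (Iic x)).toReal with hF
  have hfix : S.Top F = F := S.cdf_fixed g hmeas hiff ν hprob hν hinv
  set s : ℝ := max 1 (1/t) with hs
  have hs1 : (1:ℝ) ≤ s := le_max_left _ _
  have hFle : F ≤ S.phi s := by
    intro x
    have hF1 : F x ≤ 1 := by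
      rw [hF]
      have := measure_mono (μ := ν) (subset_univ (Iic x))
      rw [measure_univ] at this
      simpa using ENNReal.toReal_mono ENNReal.one_ne_top this
    have htF : t * F x ≤ S.Fmax x := by
      have h := hle x
      rw [S.mu_Iic] at h
      have := ENNReal.toReal_mono ENNReal.ofReal_ne_top h
      rw [ENNReal.toReal_mul, ENNReal.toReal_ofReal ht.le,
        ENNReal.toReal_ofReal (S.Fmax_nonneg x)] at this
      exact this
    have hFphi : S.Fmax x ≤ S.M * clampI x ^ S.α := by
      calc S.Fmax x ≤ S.phi 1 x := S.Fmax_le_Fseq 0 x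
      _ ≤ 1 * (S.M * clampI x ^ S.α) := min_le_right _ _
      _ = S.M * clampI x ^ S.α := one_mul _
    refine le_min hF1 ?_
    calc F x ≤ (S.M * clampI x ^ S.α) / t :=
        (le_div_iff₀ ht).mpr (by rw [mul_comm]; exact htF.trans hFphi)
    _ = (1/t) * (S.M * clampI x ^ S.α) := by ring
    _ ≤ s * (S.M * clampI x ^ S.α) := by
        refine mul_le_mul_of_nonneg_right (le_max_right _ _) ?_
        exact mul_nonneg S.hM0.le (S.rpow_clamp_nonneg x)
  exact S.le_Fmax hfix hs1 hFle

end Setup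

/-! ### Calculus estimates near the endpoints -/

lemma deriv_bound_left {f : ℝ → ℝ} {γ c : ℝ} (hγ : 0 < γ)
    (hcd : ContDiffOn ℝ 1 f (Icc 0 γ)) (hf0 : f 0 = 0)
    (hc : c < derivWithin f (Icc 0 γ) 0) :
    ∃ b, 0 < b ∧ b ≤ γ ∧ ∀ y ∈ Icc (0:ℝ) b, c * y ≤ f y := by
  have hUD : UniqueDiffOn ℝ (Icc (0:ℝ) γ) := uniqueDiffOn_Icc hγ
  have hder : ContinuousOn (derivWithin f (Icc 0 γ)) (Icc 0 γ) :=
    hcd.continuousOn_derivWithin hUD le_rfl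
  have h0 : ContinuousWithinAt (derivWithin f (Icc 0 γ)) (Icc 0 γ) 0 :=
    hder 0 ⟨le_rfl, hγ.le⟩
  have hev : ∀ᶠ y in 𝓝[Icc (0:ℝ) γ] 0, c < derivWithin f (Icc 0 γ) y :=
    h0.eventually (eventually_gt_nhds hc)
  rw [eventually_nhdsWithin_iff, Metric.eventually_nhds_iff] at hev
  obtain ⟨δ, hδ0, hδ⟩ := hev
  set b := min γ (δ/2) with hb
  have hb0 : 0 < b := lt_min hγ (by linarith)
  have hbγ : b ≤ γ := min_le_left _ _
  have hd : ∀ y ∈ Icc (0:ℝ) b, c ≤ derivWithin f (Icc 0 γ) y := by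
    intro y hy
    refine (hδ ?_ ⟨hy.1, hy.2.trans hbγ⟩).le
    rw [Real.dist_eq, sub_zero, abs_of_nonneg hy.1]
    calc y ≤ b := hy.2
    _ ≤ δ/2 := min_le_right _ _
    _ < δ := by linarith
  have hmvt := (convex_Icc (0:ℝ) b).mul_sub_le_image_sub_of_le_deriv
    (hcd.continuousOn.mono (Icc_subset_Icc_right hbγ))
    (fun x hx => by
      rw [interior_Icc] at hx
      exact ((hcd.differentiableOn one_ne_zero) x ⟨hx.1.le, hx.2.le.trans hbγ⟩).mono
        (interior_Icc (a := (0:ℝ)) (b := b) ▸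
          (Ioo_subset_Icc_self).trans (Icc_subset_Icc_right hbγ)))
    (fun x hx => by
      rw [interior_Icc] at hx
      have hnh : Icc (0:ℝ) γ ∈ 𝓝 x := Icc_mem_nhds hx.1 (hx.2.trans_le hbγ)
      rw [← derivWithin_of_mem_nhds hnh]
      exact hd x ⟨hx.1.le, hx.2.le⟩)
  refine ⟨b, hb0, hbγ, fun y hy => ?_⟩
  have := hmvt 0 ⟨le_rfl, hb0.le⟩ y ⟨hy.1, hy.2⟩ hy.1
  rw [hf0, sub_zero, sub_zero] at this
  exact this

lemma deriv_bound_right {f : ℝ → ℝ} {γ c : ℝ} (hγ : 0 < γ) (hγ1 : γ ≤ 1)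
    (hcd : ContDiffOn ℝ 1 f (Icc (1-γ) 1)) (hf1 : f 1 = 1)
    (hc : c < derivWithin f (Icc (1-γ) 1) 1) :
    ∃ b, 0 < b ∧ b ≤ γ ∧ ∀ y ∈ Icc (1-b) (1:ℝ), c * (1 - y) ≤ 1 - f y := by
  have hlt : (1:ℝ) - γ < 1 := by linarith
  have hUD : UniqueDiffOn ℝ (Icc (1-γ) (1:ℝ)) := uniqueDiffOn_Icc hlt
  have hder : ContinuousOn (derivWithin f (Icc (1-γ) 1)) (Icc (1-γ) 1) :=
    hcd.continuousOn_derivWithin hUD le_rfl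
  have h0 : ContinuousWithinAt (derivWithin f (Icc (1-γ) 1)) (Icc (1-γ) 1) 1 :=
    hder 1 ⟨by linarith, le_rfl⟩
  have hev : ∀ᶠ y in 𝓝[Icc (1-γ) (1:ℝ)] 1, c < derivWithin f (Icc (1-γ) 1) y :=
    h0.eventually (eventually_gt_nhds hc)
  rw [eventually_nhdsWithin_iff, Metric.eventually_nhds_iff] at hev
  obtain ⟨δ, hδ0, hδ⟩ := hev
  set b := min γ (δ/2) with hb
  have hb0 : 0 < b := lt_min hγ (by linarith)
  have hbγ : b ≤ γ := min_le_left _ _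
  have hsub : Icc (1-b) (1:ℝ) ⊆ Icc (1-γ) 1 := Icc_subset_Icc_left (by linarith)
  have hd : ∀ y ∈ Icc (1-b) (1:ℝ), c ≤ derivWithin f (Icc (1-γ) 1) y := by
    intro y hy
    refine (hδ ?_ (hsub hy)).le
    rw [Real.dist_eq, abs_of_nonpos (by linarith [hy.2])]
    have : 1 - y ≤ b := by linarith [hy.1]
    calc -(y - 1) = 1 - y := by ring
    _ ≤ b := this
    _ ≤ δ/2 := min_le_right _ _
    _ < δ := by linarith
  have hmvt := (convex_Icc (1-b) (1:ℝ)).mul_sub_le_image_sub_of_le_deriv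
    (hcd.continuousOn.mono hsub)
    (fun x hx => by
      rw [interior_Icc] at hx
      exact ((hcd.differentiableOn one_ne_zero) x (hsub ⟨hx.1.le, hx.2.le⟩)).mono
        (interior_Icc (a := (1-b)) (b := (1:ℝ)) ▸ (Ioo_subset_Icc_self).trans hsub))
    (fun x hx => by
      rw [interior_Icc] at hx
      have hnh : Icc (1-γ) (1:ℝ) ∈ 𝓝 x := Icc_mem_nhds (by linarith [hx.1]) hx.2
      rw [← derivWithin_of_mem_nhds hnh]
      exact hd x ⟨hx.1.le, hx.2.le⟩)
  refine ⟨b, hb0, hbγ, fun y hy => ?_⟩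
  have := hmvt y hy 1 ⟨by linarith, le_rfl⟩ hy.2
  rw [hf1] at this
  exact this

/-- Choice of the exponent `α` from positivity of the Lyapunov exponents. -/
lemma exists_alpha {k : ℕ} (p : Fin k → ℝ) (c c' : Fin k → ℝ)
    (hc : ∀ i, 0 < c i) (hc' : ∀ i, 0 < c' i) (hps : ∑ i, p i = 1)
    (h1 : 0 < ∑ i, p i * Real.log (c i)) (h2 : 0 < ∑ i, p i * Real.log (c' i)) :
    ∃ α : ℝ, 0 < α ∧ (∑ i, p i * Real.exp (α * (- Real.log (c i)))) < 1 ∧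
      (∑ i, p i * Real.exp (α * (- Real.log (c' i)))) < 1 := by
  have key : ∀ d : Fin k → ℝ, (∀ i, 0 < d i) → 0 < ∑ i, p i * Real.log (d i) →
      ∀ᶠ a in 𝓝[>] (0:ℝ), (∑ i, p i * Real.exp (a * (- Real.log (d i)))) < 1 := by
    intro d hd hL
    set q : ℝ → ℝ := fun a => ∑ i, p i * Real.exp (a * (- Real.log (d i))) with hq
    have hder : HasDerivAt q (∑ i, p i * (- Real.log (d i))) 0 := by
      have : ∀ i ∈ Finset.univ, HasDerivAt
          (fun a : ℝ => p i * Real.exp (a * (- Real.log (d i))))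
          (p i * (- Real.log (d i))) 0 := by
        intro i _
        have h1' : HasDerivAt (fun a : ℝ => a * (- Real.log (d i))) (- Real.log (d i)) 0 :=
          hasDerivAt_mul_const _
        have h2' := h1'.exp
        simp only [zero_mul, Real.exp_zero, one_mul, mul_one] at h2'
        exact h2'.const_mul (p i)
      have := HasDerivAt.fun_sum this
      convert this using 1
    have hq0 : q 0 = 1 := by
      simp only [hq, zero_mul, Real.exp_zero, mul_one, hps]
    have hD : (∑ i, p i * (- Real.log (d i))) < 0 := by
      have : ∑ i, p i * (- Real.log (d i)) = - ∑ i, p i * Real.log (d i) := by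
        rw [← Finset.sum_neg_distrib]
        exact Finset.sum_congr rfl fun i _ => by ring
      rw [this]
      linarith
    rw [hasDerivAt_iff_tendsto_slope] at hder
    have hev : ∀ᶠ a in 𝓝[≠] (0:ℝ), slope q 0 a < 0 := hder.eventually_lt_const hD
    have hmono : 𝓝[>] (0:ℝ) ≤ 𝓝[≠] (0:ℝ) :=
      nhdsWithin_mono 0 fun y hy => ne_of_gt hy
    filter_upwards [hev.filter_mono hmono, self_mem_nhdsWithin] with a ha ha0
    rw [slope_def_field] at ha
    have h3 : q a - q 0 < 0 := by
      have := (div_lt_iff₀ (by simpa using ha0 : (0:ℝ) < a - 0)).mp ha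
      simpa using this
    rw [hq0] at h3
    linarith
  have hboth := ((key c hc h1).and (key c' hc' h2)).and self_mem_nhdsWithin
  obtain ⟨α, ⟨hA, hB⟩, hα0⟩ := hboth.exists
  exact ⟨α, hα0, hA, hB⟩

/-- Construction of the abstract setup from an admissible IFS. -/
lemma exists_setup (β : ℝ) (hβ : 0 < β) (k : ℕ)
    (g : Fin k → ℝ → ℝ) (p : Fin k → ℝ)
    (hmeas : ∀ i, Measurable (g i)) (hadm : Admissible β g p) :
    ∃ S : Setup k, S.p = p ∧
      ∀ i, ∀ y ∈ Ioo (0:ℝ) 1, ∀ x : ℝ, (g i y ≤ x ↔ y ≤ S.G i x) := by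
  have hk : 0 < k := by
    rcases Nat.eq_zero_or_pos k with h | h
    · exfalso
      have hps := hadm.p_sum
      subst h
      simp at hps
    · exact h
  haveI : Nonempty (Fin k) := ⟨⟨0, hk⟩⟩
  have hmem01 : ∀ i, MapsTo (g i) (Icc (0:ℝ) 1) (Icc (0:ℝ) 1) := fun i => (hadm.cplus i).mapsTo
  have hsm : ∀ i, StrictMonoOn (g i) (Icc (0:ℝ) 1) := by
    intro i x hx y hy hxy
    refine lt_of_le_of_ne ((hadm.cplus i).mono hx hy hxy.le) fun he => hxy.ne ?_
    exact (hadm.homeo i).2.1 hx hy he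
  have hGex : ∀ i (y : ℝ), ∃ x, x ∈ Icc (0:ℝ) 1 ∧ g i x = clampI y := by
    intro i y
    obtain ⟨x, hx, hgx⟩ := (hadm.homeo i).2.2 (clampI_mem y)
    exact ⟨x, hx, hgx⟩
  choose G hGmem hGval using hGex
  have hg0 : ∀ i, g i 0 = 0 := fun i => (hadm.cplus i).map_zero
  have hg1 : ∀ i, g i 1 = 1 := fun i => (hadm.cplus i).map_one
  have hGg : ∀ i, ∀ x ∈ Icc (0:ℝ) 1, G i (g i x) = x := by
    intro i x hx
    have h1 : g i (G i (g i x)) = clampI (g i x) := hGval i (g i x)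
    rw [clampI_of_mem (hmem01 i hx)] at h1
    exact (hadm.homeo i).2.1 (hGmem i (g i x)) hx h1
  have hG0 : ∀ i, ∀ x : ℝ, x ≤ 0 → G i x = 0 := by
    intro i x hx
    have h1 : g i (G i x) = 0 := by rw [hGval i x, clampI_of_nonpos hx]
    exact (hadm.homeo i).2.1 (hGmem i x) (left_mem_Icc.mpr zero_le_one) (by rw [h1, hg0 i])
  have hG1 : ∀ i, ∀ x : ℝ, 1 ≤ x → G i x = 1 := by
    intro i x hx
    have h1 : g i (G i x) = 1 := by rw [hGval i x, clampI_of_one_le hx]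
    exact (hadm.homeo i).2.1 (hGmem i x) (right_mem_Icc.mpr zero_le_one) (by rw [h1, hg1 i])
  have hGmono : ∀ i, Monotone (G i) := by
    intro i x y hxy
    have h1 : clampI x ≤ clampI y := clampI_mono hxy
    rw [← hGval i x, ← hGval i y] at h1
    exact ((hsm i).le_iff_le (hGmem i x) (hGmem i y)).mp h1
  have hgIoo : ∀ i, ∀ y ∈ Ioo (0:ℝ) 1, g i y ∈ Ioo (0:ℝ) 1 := by
    intro i y hy
    have hyI : y ∈ Icc (0:ℝ) 1 := ⟨hy.1.le, hy.2.le⟩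
    constructor
    · rw [← hg0 i]
      exact hsm i (left_mem_Icc.mpr zero_le_one) hyI hy.1
    · rw [← hg1 i]
      exact hsm i hyI (right_mem_Icc.mpr zero_le_one) hy.2
  have hiff : ∀ i, ∀ y ∈ Ioo (0:ℝ) 1, ∀ x : ℝ, (g i y ≤ x ↔ y ≤ G i x) := by
    intro i y hy x
    have hyI : y ∈ Icc (0:ℝ) 1 := ⟨hy.1.le, hy.2.le⟩
    rcases lt_or_ge x 0 with hx | hx
    · constructor
      · intro h
        exact absurd (lt_of_le_of_lt h hx) (not_lt.mpr (hgIoo i y hy).1.le)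
      · intro h
        rw [hG0 i x hx.le] at h
        exact absurd h (not_le.mpr hy.1)
    rcases le_or_gt x 1 with hx1 | hx1
    · have hgx : g i (G i x) = x := by rw [hGval i x, clampI_of_mem ⟨hx, hx1⟩]
      constructor
      · intro h
        exact ((hsm i).le_iff_le hyI (hGmem i x)).mp (by rw [hgx]; exact h)
      · intro h
        calc g i y ≤ g i (G i x) := (hadm.cplus i).mono hyI (hGmem i x) h
        _ = x := hgx
    · constructor
      · intro _
        rw [hG1 i x hx1.le]
        exact hy.2.le
      · intro _
        exact le_trans (hmem01 i hyI).2 hx1.le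
  have hGcont : ∀ i, Continuous (G i) := by
    intro i
    have hEmono : Monotone (fun y => G i y + max 0 (y - 1) + min 0 y) := by
      refine ((hGmono i).add ?_).add ?_
      · exact monotone_const.max fun a b h => sub_le_sub_right h 1
      · exact monotone_const.min monotone_id
    have hEsurj : Function.Surjective (fun y => G i y + max 0 (y - 1) + min 0 y) := by
      intro z
      rcases le_or_gt z 0 with hz | hz
      · refine ⟨z, ?_⟩
        simp only
        rw [hG0 i z hz, max_eq_left (by linarith), min_eq_right hz]
        ring
      rcases le_or_gt z 1 with hz1 | hz1
      · refine ⟨g i z, ?_⟩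
        have hgz : g i z ∈ Icc (0:ℝ) 1 := hmem01 i ⟨hz.le, hz1⟩
        simp only
        rw [hGg i z ⟨hz.le, hz1⟩, max_eq_left (by linarith [hgz.2]), min_eq_left hgz.1]
        ring
      · refine ⟨z, ?_⟩
        simp only
        rw [hG1 i z hz1.le, max_eq_right (by linarith), min_eq_left (by linarith)]
        ring
    have hEcont : Continuous (fun y => G i y + max 0 (y - 1) + min 0 y) :=
      hEmono.continuous_of_surjective hEsurj
    have hGeq : G i = fun y =>
        ((fun y => G i y + max 0 (y - 1) + min 0 y) y - max 0 (y - 1)) - min 0 y := by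
      funext y
      ring
    rw [hGeq]
    exact (hEcont.sub (continuous_const.max (continuous_id.sub continuous_const))).sub
      (continuous_const.min continuous_id)
  -- derivative estimates
  set γ := min β 1 with hγdef
  have hγ0 : 0 < γ := lt_min hβ one_pos
  have hγβ : γ ≤ β := min_le_left _ _
  have hγ1 : γ ≤ 1 := min_le_right _ _
  have hIccL : Icc (0:ℝ) 1 ∩ Icc (-γ) γ = Icc 0 γ := by
    rw [Icc_inter_Icc, sup_eq_left.mpr (by linarith : -γ ≤ (0:ℝ)), inf_eq_right.mpr hγ1]
  have hIccR : Icc (0:ℝ) 1 ∩ Icc (1-γ) (1+γ) = Icc (1-γ) 1 := by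
    rw [Icc_inter_Icc, sup_eq_right.mpr (by linarith : (0:ℝ) ≤ 1-γ),
      inf_eq_left.mpr (by linarith : (1:ℝ) ≤ 1+γ)]
  have hdL : ∀ i, derivWithin (g i) (Icc 0 γ) 0 = derivWithin (g i) (Icc 0 1) 0 := by
    intro i
    rw [← hIccL, derivWithin_inter (Icc_mem_nhds (by linarith) hγ0)]
  have hdR : ∀ i, derivWithin (g i) (Icc (1-γ) 1) 1 = derivWithin (g i) (Icc 0 1) 1 := by
    intro i
    rw [← hIccR, derivWithin_inter (Icc_mem_nhds (by linarith) (by linarith))]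
  set L0 := ∑ i, p i * Real.log (derivWithin (g i) (Icc (0:ℝ) 1) 0) with hL0def
  set L1 := ∑ i, p i * Real.log (derivWithin (g i) (Icc (0:ℝ) 1) 1) with hL1def
  have hL0 : 0 < L0 := hadm.lyap0
  have hL1 : 0 < L1 := hadm.lyap1
  set c0 : Fin k → ℝ := fun i => Real.exp (-(L0/2)) * derivWithin (g i) (Icc (0:ℝ) 1) 0
    with hc0def
  set c1 : Fin k → ℝ := fun i => Real.exp (-(L1/2)) * derivWithin (g i) (Icc (0:ℝ) 1) 1
    with hc1def
  have hc0pos : ∀ i, 0 < c0 i := fun i => mul_pos (Real.exp_pos _) (hadm.deriv0_pos i)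
  have hc1pos : ∀ i, 0 < c1 i := fun i => mul_pos (Real.exp_pos _) (hadm.deriv1_pos i)
  have hexplt : ∀ a : ℝ, 0 < a → Real.exp (-(a/2)) < 1 := by
    intro a ha
    calc Real.exp (-(a/2)) < Real.exp 0 := Real.exp_lt_exp.mpr (by linarith)
    _ = 1 := Real.exp_zero
  have hc0lt : ∀ i, c0 i < derivWithin (g i) (Icc (0:ℝ) 1) 0 := by
    intro i
    have := hadm.deriv0_pos i
    rw [hc0def]
    simp only
    nlinarith [hexplt L0 hL0, Real.exp_pos (-(L0/2))]
  have hc1lt : ∀ i, c1 i < derivWithin (g i) (Icc (0:ℝ) 1) 1 := by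
    intro i
    have := hadm.deriv1_pos i
    rw [hc1def]
    simp only
    nlinarith [hexplt L1 hL1, Real.exp_pos (-(L1/2))]
  have hc0sum : 0 < ∑ i, p i * Real.log (c0 i) := by
    have heq : ∀ i, Real.log (c0 i) = -(L0/2) + Real.log (derivWithin (g i) (Icc (0:ℝ) 1) 0) := by
      intro i
      rw [hc0def]
      simp only
      rw [Real.log_mul (Real.exp_ne_zero _) (hadm.deriv0_pos i).ne', Real.log_exp]
    calc (0:ℝ) < L0/2 := by linarith
    _ = (∑ i, p i) * (-(L0/2)) + L0 := by rw [hadm.p_sum]; ring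
    _ = ∑ i, p i * Real.log (c0 i) := by
        rw [Finset.sum_mul, hL0def, ← Finset.sum_add_distrib]
        exact Finset.sum_congr rfl fun i _ => by rw [heq i]; ring
  have hc1sum : 0 < ∑ i, p i * Real.log (c1 i) := by
    have heq : ∀ i, Real.log (c1 i) = -(L1/2) + Real.log (derivWithin (g i) (Icc (0:ℝ) 1) 1) := by
      intro i
      rw [hc1def]
      simp only
      rw [Real.log_mul (Real.exp_ne_zero _) (hadm.deriv1_pos i).ne', Real.log_exp]
    calc (0:ℝ) < L1/2 := by linarith
    _ = (∑ i, p i) * (-(L1/2)) + L1 := by rw [hadm.p_sum]; ring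
    _ = ∑ i, p i * Real.log (c1 i) := by
        rw [Finset.sum_mul, hL1def, ← Finset.sum_add_distrib]
        exact Finset.sum_congr rfl fun i _ => by rw [heq i]; ring
  obtain ⟨α, hα0, hρ0lt, hρ1lt⟩ := exists_alpha p c0 c1 hc0pos hc1pos hadm.p_sum hc0sum hc1sum
  set ρ₀ := ∑ i, p i * Real.exp (α * (- Real.log (c0 i))) with hρ₀def
  set ρ₁ := ∑ i, p i * Real.exp (α * (- Real.log (c1 i))) with hρ₁def
  set ρ := max ρ₀ ρ₁ with hρdef
  have hρnn : 0 ≤ ρ := by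
    have : 0 ≤ ρ₀ := Finset.sum_nonneg fun i _ =>
      mul_nonneg (hadm.p_pos i).le (Real.exp_pos _).le
    exact this.trans (le_max_left _ _)
  have hρlt1 : ρ < 1 := max_lt hρ0lt hρ1lt
  -- slope bounds
  have hbl : ∀ i, ∃ b, 0 < b ∧ b ≤ γ ∧ ∀ y ∈ Icc (0:ℝ) b, c0 i * y ≤ g i y := by
    intro i
    refine deriv_bound_left hγ0 ((hadm.cplus i).c1_left.mono (Icc_subset_Icc_right hγβ))
      (hg0 i) ?_
    rw [hdL i]
    exact hc0lt i
  choose b0 hb0pos hb0γ hb0prop using hbl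
  have hbr : ∀ i, ∃ b, 0 < b ∧ b ≤ γ ∧ ∀ y ∈ Icc (1-b) (1:ℝ), c1 i * (1 - y) ≤ 1 - g i y := by
    intro i
    refine deriv_bound_right hγ0 hγ1 ((hadm.cplus i).c1_right.mono
      (Icc_subset_Icc_left (by linarith))) (hg1 i) ?_
    rw [hdR i]
    exact hc1lt i
  choose b1 hb1pos hb1γ hb1prop using hbr
  -- uniform radii
  obtain ⟨i0, -, hi0⟩ := Finset.exists_min_image Finset.univ b0 Finset.univ_nonempty
  obtain ⟨i1, -, hi1⟩ := Finset.exists_min_image Finset.univ b1 Finset.univ_nonempty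
  set B0 := b0 i0 with hB0def
  set B1 := b1 i1 with hB1def
  have hB0pos : 0 < B0 := hb0pos i0
  have hB1pos : 0 < B1 := hb1pos i1
  have hB0le : ∀ i, B0 ≤ b0 i := fun i => hi0 i (Finset.mem_univ i)
  have hB1le : ∀ i, B1 ≤ b1 i := fun i => hi1 i (Finset.mem_univ i)
  have hB0mem : B0 ∈ Icc (0:ℝ) 1 := ⟨hB0pos.le, (hb0γ i0).trans hγ1⟩
  have hB1mem : (1 - B1) ∈ Icc (0:ℝ) 1 := ⟨by linarith [(hb1γ i1).trans hγ1], by linarith⟩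
  -- thresholds
  obtain ⟨j0, -, hj0⟩ := Finset.exists_min_image Finset.univ (fun i => g i B0)
    Finset.univ_nonempty
  obtain ⟨j1, -, hj1⟩ := Finset.exists_min_image Finset.univ (fun i => 1 - g i (1 - B1))
    Finset.univ_nonempty
  set x0 := g j0 B0 with hx0def
  set x1 := 1 - g j1 (1 - B1) with hx1def
  have hx0pos : 0 < x0 := by
    have h := hsm j0 (left_mem_Icc.mpr zero_le_one) hB0mem hB0pos
    rw [hg0 j0] at h
    exact h
  have hx1pos : 0 < x1 := by
    have h := hsm j1 hB1mem (right_mem_Icc.mpr zero_le_one) (by linarith : 1 - B1 < 1)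
    rw [hg1 j1] at h
    rw [hx1def]
    linarith
  have hx0le : ∀ i, x0 ≤ g i B0 := fun i => hj0 i (Finset.mem_univ i)
  have hx1le : ∀ i, x1 ≤ 1 - g i (1 - B1) := fun i => hj1 i (Finset.mem_univ i)
  set τ := min x0 (min x1 (1/2)) with hτdef
  have hτ0 : 0 < τ := lt_min hx0pos (lt_min hx1pos (by norm_num))
  have hτhalf : τ ≤ 1/2 := (min_le_right _ _).trans (min_le_right _ _)
  have hτx0 : τ ≤ x0 := min_le_left _ _
  have hτx1 : τ ≤ x1 := (min_le_right _ _).trans (min_le_left _ _)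
  -- the key inequalities
  have hA : ∀ u ∈ Ioc (0:ℝ) τ, ∑ i, p i * (G i u) ^ α ≤ ρ * u ^ α := by
    intro u hu
    have hu01 : u ∈ Icc (0:ℝ) 1 := ⟨hu.1.le, hu.2.trans (by linarith)⟩
    have hgu : ∀ i, g i (G i u) = u := fun i => by rw [hGval i u, clampI_of_mem hu01]
    have key : ∀ i, G i u ≤ u / c0 i := by
      intro i
      have hGb : G i u ≤ B0 := by
        have h1 : g i (G i u) ≤ g i B0 := by
          rw [hgu i]
          exact (hu.2.trans hτx0).trans (hx0le i)
        exact ((hsm i).le_iff_le (hGmem i u) hB0mem).mp h1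
      have h2 : c0 i * G i u ≤ g i (G i u) :=
        hb0prop i (G i u) ⟨(hGmem i u).1, hGb.trans (hB0le i)⟩
      rw [hgu i] at h2
      exact (le_div_iff₀ (hc0pos i)).mpr (by linarith [mul_comm (c0 i) (G i u)])
    calc ∑ i, p i * (G i u) ^ α
        ≤ ∑ i, p i * (u ^ α * Real.exp (α * (- Real.log (c0 i)))) := by
          refine Finset.sum_le_sum fun i _ => mul_le_mul_of_nonneg_left ?_ (hadm.p_pos i).le
          calc (G i u) ^ α ≤ (u / c0 i) ^ α :=
                Real.rpow_le_rpow (hGmem i u).1 (key i) hα0.le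
          _ = u ^ α * Real.exp (α * (- Real.log (c0 i))) := by
              rw [Real.div_rpow hu.1.le (hc0pos i).le,
                Real.rpow_def_of_pos (hc0pos i), div_eq_mul_inv, ← Real.exp_neg]
              congr 2
              ring
    _ = u ^ α * ρ₀ := by
          rw [hρ₀def, Finset.mul_sum]
          exact Finset.sum_congr rfl fun i _ => by ring
    _ ≤ ρ * u ^ α := by
          have huα : 0 ≤ u ^ α := Real.rpow_nonneg hu.1.le _
          have : ρ₀ ≤ ρ := le_max_left _ _
          nlinarith
  have hB : ∀ u ∈ Ioc (0:ℝ) τ, ∑ i, p i * (1 - G i (1-u)) ^ α ≤ ρ * u ^ α := by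
    intro u hu
    have hu01 : (1 - u) ∈ Icc (0:ℝ) 1 := ⟨by linarith [hu.2.trans hτhalf], by linarith [hu.1]⟩
    have hgu : ∀ i, g i (G i (1-u)) = 1 - u := fun i => by
      rw [hGval i (1-u), clampI_of_mem hu01]
    have key : ∀ i, 1 - G i (1-u) ≤ u / c1 i := by
      intro i
      have hGb : 1 - B1 ≤ G i (1-u) := by
        have h1 : g i (1 - B1) ≤ g i (G i (1-u)) := by
          rw [hgu i]
          have := hx1le i
          have := hu.2.trans hτx1
          linarith
        exact ((hsm i).le_iff_le hB1mem (hGmem i (1-u))).mp h1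
      have h2 : c1 i * (1 - G i (1-u)) ≤ 1 - g i (G i (1-u)) :=
        hb1prop i (G i (1-u)) ⟨by linarith [hB1le i, hGb], (hGmem i (1-u)).2⟩
      rw [hgu i] at h2
      have h3 : c1 i * (1 - G i (1-u)) ≤ u := by linarith
      exact (le_div_iff₀ (hc1pos i)).mpr (by linarith [mul_comm (c1 i) (1 - G i (1-u))])
    calc ∑ i, p i * (1 - G i (1-u)) ^ α
        ≤ ∑ i, p i * (u ^ α * Real.exp (α * (- Real.log (c1 i)))) := by
          refine Finset.sum_le_sum fun i _ => mul_le_mul_of_nonneg_left ?_ (hadm.p_pos i).le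
          calc (1 - G i (1-u)) ^ α ≤ (u / c1 i) ^ α :=
                Real.rpow_le_rpow (by linarith [(hGmem i (1-u)).2]) (key i) hα0.le
          _ = u ^ α * Real.exp (α * (- Real.log (c1 i))) := by
              rw [Real.div_rpow hu.1.le (hc1pos i).le,
                Real.rpow_def_of_pos (hc1pos i), div_eq_mul_inv, ← Real.exp_neg]
              congr 2
              ring
    _ = u ^ α * ρ₁ := by
          rw [hρ₁def, Finset.mul_sum]
          exact Finset.sum_congr rfl fun i _ => by ring
    _ ≤ ρ * u ^ α := by
          have huα : 0 ≤ u ^ α := Real.rpow_nonneg hu.1.le _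
          have : ρ₁ ≤ ρ := le_max_right _ _
          nlinarith
  exact ⟨⟨p, G, τ, α, ρ, fun i => (hadm.p_pos i).le, hadm.p_sum, hGmem, hGmono, hGcont,
    hG0, hG1, hτ0, hτhalf, hα0, hρnn, hρlt1, hA, hB⟩, rfl, hiff⟩

end IFSErg

/-- Every admissible IFS admits an invariant probability measure
in `M₁(0,1)` which is ergodic, i.e. an extreme point of the convex set of
invariant probability measures of the Markov operator. -/
theorem exists_ergodic_invariant_measure (β : ℝ) (hβ : 0 < β) (k : ℕ)
    (g : Fin k → ℝ → ℝ) (p : Fin k → ℝ)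
    (hmeas : ∀ i, Measurable (g i)) (hadm : Admissible β g p) :
    ∃ μ : Measure ℝ, MemM1 μ ∧ markovOp g p μ = μ ∧
      ∀ t : ℝ, t ∈ Ioo (0 : ℝ) 1 → ∀ ν₁ ν₂ : Measure ℝ,
        IsProbabilityMeasure ν₁ → IsProbabilityMeasure ν₂ →
        markovOp g p ν₁ = ν₁ → markovOp g p ν₂ = ν₂ →
        μ = ENNReal.ofReal t • ν₁ + ENNReal.ofReal (1 - t) • ν₂ → ν₁ = ν₂ := by
  obtain ⟨S, hSp, hiff⟩ := IFSErg.exists_setup β hβ k g p hmeas hadm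
  subst hSp
  refine ⟨S.mu, ⟨S.mu_prob, S.mu_Ioo⟩, S.mu_invariant g hmeas hiff, ?_⟩
  intro t ht ν₁ ν₂ hp1 hp2 hinv1 hinv2 hdec
  have happ : ∀ A : Set ℝ,
      S.mu A = ENNReal.ofReal t * ν₁ A + ENNReal.ofReal (1-t) * ν₂ A := by
    intro A
    rw [hdec]
    simp [Measure.add_apply, Measure.smul_apply, smul_eq_mul]
  have ht0 : (0:ℝ) < t := ht.1
  have ht1 : (0:ℝ) < 1 - t := by linarith [ht.2]
  have hoft : ENNReal.ofReal t ≠ 0 := by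
    simp only [ne_eq, ENNReal.ofReal_eq_zero, not_le]
    exact ht0
  have hoft1 : ENNReal.ofReal (1-t) ≠ 0 := by
    simp only [ne_eq, ENNReal.ofReal_eq_zero, not_le]
    exact ht1
  have hnull : ∀ A : Set ℝ, S.mu A = 0 → ν₁ A = 0 ∧ ν₂ A = 0 := by
    intro A hA
    have h := happ A
    rw [hA] at h
    have h' := add_eq_zero.mp h.symm
    constructor
    · rcases mul_eq_zero.mp h'.1 with h'' | h''
      · exact absurd h'' hoft
      · exact h''
    · rcases mul_eq_zero.mp h'.2 with h'' | h''
      · exact absurd h'' hoft1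
      · exact h''
  obtain ⟨h10, h20⟩ := hnull (Iic 0) S.mu_Iic_zero
  obtain ⟨h11, h21⟩ := hnull {1} S.mu_singleton_one
  obtain ⟨h12, h22⟩ := hnull (Ioi 1) S.mu_Ioi_one
  have hν1full : ν₁ (Ioo (0:ℝ) 1) = 1 := IFSErg.Ioo_full hp1 h10 h11 h12
  have hν2full : ν₂ (Ioo (0:ℝ) 1) = 1 := IFSErg.Ioo_full hp2 h20 h21 h22
  have hle1 : ∀ x : ℝ, ENNReal.ofReal t * ν₁ (Iic x) ≤ S.mu (Iic x) := by
    intro x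
    rw [happ (Iic x)]
    exact le_self_add
  have hle2 : ∀ x : ℝ, ENNReal.ofReal (1-t) * ν₂ (Iic x) ≤ S.mu (Iic x) := by
    intro x
    rw [happ (Iic x)]
    exact le_add_self
  have hF1 := S.component_le_Fmax g hmeas hiff ν₁ hp1 hν1full hinv1 ht0 hle1
  have hF2 := S.component_le_Fmax g hmeas hiff ν₂ hp2 hν2full hinv2 ht1 hle2
  have heq : ∀ x : ℝ, (ν₁ (Iic x)).toReal = (ν₂ (Iic x)).toReal := by
    intro x
    have h := happ (Iic x)
    rw [S.mu_Iic] at h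
    have hne1 : ENNReal.ofReal t * ν₁ (Iic x) ≠ ⊤ :=
      ENNReal.mul_ne_top ENNReal.ofReal_ne_top (measure_ne_top _ _)
    have hne2 : ENNReal.ofReal (1-t) * ν₂ (Iic x) ≠ ⊤ :=
      ENNReal.mul_ne_top ENNReal.ofReal_ne_top (measure_ne_top _ _)
    have htr := congrArg ENNReal.toReal h
    rw [ENNReal.toReal_ofReal (S.Fmax_nonneg x), ENNReal.toReal_add hne1 hne2,
      ENNReal.toReal_mul, ENNReal.toReal_mul, ENNReal.toReal_ofReal ht0.le,
      ENNReal.toReal_ofReal ht1.le] at htr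
    set a := (ν₁ (Iic x)).toReal
    set b := (ν₂ (Iic x)).toReal
    have h1 : a ≤ S.Fmax x := hF1 x
    have h2 : b ≤ S.Fmax x := hF2 x
    have p1 : t * a ≤ t * S.Fmax x := mul_le_mul_of_nonneg_left h1 ht0.le
    have p2 : (1-t) * b ≤ (1-t) * S.Fmax x := mul_le_mul_of_nonneg_left h2 ht1.le
    have hFid : t * S.Fmax x + (1-t) * S.Fmax x = S.Fmax x := by ring
    have e1 : t * a = t * S.Fmax x := by linarith
    have e2 : (1-t) * b = (1-t) * S.Fmax x := by linarith
    have ha : a = S.Fmax x := mul_left_cancel₀ ht0.ne' e1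
    have hb : b = S.Fmax x := mul_left_cancel₀ ht1.ne' e2
    rw [ha, hb]
  haveI : IsFiniteMeasure ν₁ := inferInstance
  refine Measure.ext_of_Iic ν₁ ν₂ fun a => ?_
  calc ν₁ (Iic a) = ENNReal.ofReal ((ν₁ (Iic a)).toReal) :=
        (ENNReal.ofReal_toReal (measure_ne_top _ _)).symm
  _ = ENNReal.ofReal ((ν₂ (Iic a)).toReal) := by rw [heq a]
  _ = ν₂ (Iic a) := ENNReal.ofReal_toReal (measure_ne_top _ _)

end
end

section
/- For every admissible Iterated Function System (Γ,p) with Markov operator P, there exist M > 0 and α ∈ (0,1) such that N_{M,α} is nonempty and P(N_{M,α}) ⊆ N_{M,α}. -/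
open MeasureTheory Set Filter Topology

noncomputable section

private lemma slope_lower_aux {f : ℝ → ℝ} {a b C : ℝ}
    (hf : ContinuousOn f (Icc a b)) (hf' : DifferentiableOn ℝ f (Ioo a b))
    (hge : ∀ z ∈ Ioo a b, C ≤ deriv f z) {x y : ℝ} (hx : x ∈ Icc a b) (hy : y ∈ Icc a b)
    (hxy : x ≤ y) : C * (y - x) ≤ f y - f x :=
  (convex_Icc a b).mul_sub_le_image_sub_of_le_deriv hf
    (by rwa [interior_Icc]) (by rwa [interior_Icc]) x hx y hy hxy

private lemma left_edge_bound {β : ℝ} (hβ : 0 < β) {f : ℝ → ℝ}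
    (hc1 : ContDiffOn ℝ 1 f (Icc 0 β)) (hf0 : f 0 = 0)
    {t : ℝ} (ht : t < derivWithin f (Icc (0:ℝ) 1) 0) :
    ∃ γ ∈ Ioo (0:ℝ) 1, ∀ x ∈ Icc (0:ℝ) γ, t * x ≤ f x := by
  set β₁ := min β 1 with hβ₁def
  have hβ₁ : 0 < β₁ := lt_min hβ one_pos
  have hβ₁le : β₁ ≤ 1 := min_le_right _ _
  have hc1' : ContDiffOn ℝ 1 f (Icc 0 β₁) := hc1.mono (Icc_subset_Icc_right (min_le_left _ _))
  have hsets : Icc (0:ℝ) β₁ =ᶠ[𝓝 (0:ℝ)] Icc (0:ℝ) 1 := by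
    filter_upwards [Metric.ball_mem_nhds (0:ℝ) hβ₁] with z hz
    simp only [Metric.mem_ball, Real.dist_eq, sub_zero] at hz
    have h1 : z ≤ β₁ := (le_abs_self z).trans hz.le
    have h2 : z ≤ 1 := h1.trans hβ₁le
    show (z ∈ Icc (0:ℝ) β₁) = (z ∈ Icc (0:ℝ) 1)
    simp only [mem_Icc, eq_iff_iff]
    constructor
    · rintro ⟨h1', _⟩; exact ⟨h1', h2⟩
    · rintro ⟨h1', _⟩; exact ⟨h1', h1⟩
  have hUD : UniqueDiffOn ℝ (Icc (0:ℝ) β₁) := uniqueDiffOn_Icc hβ₁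
  set D := fun x => derivWithin f (Icc (0:ℝ) β₁) x with hDdef
  have hDcont : ContinuousOn D (Icc 0 β₁) := hc1'.continuousOn_derivWithin hUD le_rfl
  have ht' : t < D 0 := by
    rw [hDdef]
    simp only
    rw [derivWithin_congr_set hsets]
    exact ht
  have hcw : ContinuousWithinAt D (Icc 0 β₁) 0 := hDcont 0 (left_mem_Icc.2 hβ₁.le)
  obtain ⟨δ, hδ, hδ'⟩ := Metric.tendsto_nhdsWithin_nhds.1 hcw (D 0 - t) (by linarith)
  set γ := min (δ/2) (β₁/2) with hγdef
  have hγβ : γ ≤ β₁/2 := min_le_right _ _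
  have hγδ : γ ≤ δ/2 := min_le_left _ _
  have hγ0 : 0 < γ := lt_min (by linarith) (by linarith)
  have hsub : Icc (0:ℝ) γ ⊆ Icc 0 β₁ := Icc_subset_Icc_right (by linarith)
  have hDge : ∀ z ∈ Icc (0:ℝ) γ, t ≤ D z := by
    intro z hz
    have hz' : z ∈ Icc (0:ℝ) β₁ := hsub hz
    have hd : dist z 0 < δ := by
      rw [Real.dist_eq, sub_zero, abs_of_nonneg hz.1]; linarith [hz.2]
    have h5 := hδ' hz' hd
    rw [Real.dist_eq] at h5
    have h6 := abs_sub_lt_iff.1 h5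
    linarith [h6.2]
  refine ⟨γ, ⟨hγ0, by linarith⟩, ?_⟩
  intro x hx
  have hdiffAt : ∀ z ∈ Ioo (0:ℝ) γ, DifferentiableAt ℝ f z := by
    intro z hz
    have hnb : Icc (0:ℝ) β₁ ∈ 𝓝 z := Icc_mem_nhds hz.1 (by linarith [hz.2])
    exact ((hc1'.differentiableOn one_ne_zero) z (hsub (Ioo_subset_Icc_self hz))).differentiableAt hnb
  have hderge : ∀ z ∈ Ioo (0:ℝ) γ, t ≤ deriv f z := by
    intro z hz
    have hnb : Icc (0:ℝ) β₁ ∈ 𝓝 z := Icc_mem_nhds hz.1 (by linarith [hz.2])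
    have hEq : D z = deriv f z := derivWithin_of_mem_nhds hnb
    calc t ≤ D z := hDge z (Ioo_subset_Icc_self hz)
      _ = deriv f z := hEq
  have := slope_lower_aux (hc1'.continuousOn.mono hsub)
    (fun z hz => (hdiffAt z hz).differentiableWithinAt) hderge
    (left_mem_Icc.2 (by linarith [hx.2, hx.1])) hx hx.1
  rw [hf0] at this
  linarith [this]

private lemma right_edge_bound {β : ℝ} (hβ : 0 < β) {f : ℝ → ℝ}
    (hc1 : ContDiffOn ℝ 1 f (Icc (1-β) 1)) (hf1 : f 1 = 1)
    {t : ℝ} (ht : t < derivWithin f (Icc (0:ℝ) 1) 1) :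
    ∃ γ ∈ Ioo (0:ℝ) 1, ∀ x ∈ Icc (1-γ) 1, t * (1 - x) ≤ 1 - f x := by
  set β₁ := min β 1 with hβ₁def
  have hβ₁ : 0 < β₁ := lt_min hβ one_pos
  have hβ₁le : β₁ ≤ 1 := min_le_right _ _
  have hc1' : ContDiffOn ℝ 1 f (Icc (1-β₁) 1) :=
    hc1.mono (Icc_subset_Icc_left (by linarith [min_le_left β 1]))
  have hsets : Icc (1-β₁) (1:ℝ) =ᶠ[𝓝 (1:ℝ)] Icc (0:ℝ) 1 := by
    filter_upwards [Metric.ball_mem_nhds (1:ℝ) hβ₁] with z hz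
    simp only [Metric.mem_ball, Real.dist_eq] at hz
    have h1 : 1 - β₁ ≤ z := by
      have := neg_abs_le (z - 1); have := abs_lt.1 hz; linarith [this.1]
    have h2 : (0:ℝ) ≤ z := by linarith
    show (z ∈ Icc (1-β₁) (1:ℝ)) = (z ∈ Icc (0:ℝ) 1)
    simp only [mem_Icc, eq_iff_iff]
    constructor
    · rintro ⟨_, h'⟩; exact ⟨h2, h'⟩
    · rintro ⟨_, h'⟩; exact ⟨h1, h'⟩
  have hUD : UniqueDiffOn ℝ (Icc (1-β₁) (1:ℝ)) := uniqueDiffOn_Icc (by linarith)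
  set D := fun x => derivWithin f (Icc (1-β₁) (1:ℝ)) x with hDdef
  have hDcont : ContinuousOn D (Icc (1-β₁) 1) := hc1'.continuousOn_derivWithin hUD le_rfl
  have ht' : t < D 1 := by
    rw [hDdef]
    simp only
    rw [derivWithin_congr_set hsets]
    exact ht
  have hcw : ContinuousWithinAt D (Icc (1-β₁) 1) 1 := hDcont 1 (right_mem_Icc.2 (by linarith))
  obtain ⟨δ, hδ, hδ'⟩ := Metric.tendsto_nhdsWithin_nhds.1 hcw (D 1 - t) (by linarith)
  set γ := min (δ/2) (β₁/2) with hγdef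
  have hγβ : γ ≤ β₁/2 := min_le_right _ _
  have hγδ : γ ≤ δ/2 := min_le_left _ _
  have hγ0 : 0 < γ := lt_min (by linarith) (by linarith)
  have hsub : Icc (1-γ) (1:ℝ) ⊆ Icc (1-β₁) 1 := Icc_subset_Icc_left (by linarith)
  have hDge : ∀ z ∈ Icc (1-γ) (1:ℝ), t ≤ D z := by
    intro z hz
    have hz' : z ∈ Icc (1-β₁) (1:ℝ) := hsub hz
    have hd : dist z 1 < δ := by
      rw [Real.dist_eq, abs_of_nonpos (by linarith [hz.2] : z - 1 ≤ 0)]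
      linarith [hz.1]
    have h5 := hδ' hz' hd
    rw [Real.dist_eq] at h5
    have h6 := abs_sub_lt_iff.1 h5
    linarith [h6.2]
  refine ⟨γ, ⟨hγ0, by linarith⟩, ?_⟩
  intro x hx
  have hdiffAt : ∀ z ∈ Ioo (1-γ) (1:ℝ), DifferentiableAt ℝ f z := by
    intro z hz
    have hnb : Icc (1-β₁) (1:ℝ) ∈ 𝓝 z := Icc_mem_nhds (by linarith [hz.1]) hz.2
    exact ((hc1'.differentiableOn one_ne_zero) z (hsub (Ioo_subset_Icc_self hz))).differentiableAt hnb
  have hderge : ∀ z ∈ Ioo (1-γ) (1:ℝ), t ≤ deriv f z := by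
    intro z hz
    have hnb : Icc (1-β₁) (1:ℝ) ∈ 𝓝 z := Icc_mem_nhds (by linarith [hz.1]) hz.2
    have hEq : D z = deriv f z := derivWithin_of_mem_nhds hnb
    calc t ≤ D z := hDge z (Ioo_subset_Icc_self hz)
      _ = deriv f z := hEq
  have := slope_lower_aux (hc1'.continuousOn.mono hsub)
    (fun z hz => (hdiffAt z hz).differentiableWithinAt) hderge
    hx (right_mem_Icc.2 (by linarith [hx.1])) hx.2
  rw [hf1] at this
  linarith

private lemma sum_rpow_lt_one {k : ℕ} (p d : Fin k → ℝ) (hd : ∀ i, 0 < d i)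
    (hps : ∑ i : Fin k, p i = 1)
    (h0 : 0 < ∑ i : Fin k, p i * Real.log (d i)) :
    ∀ᶠ α in 𝓝[>] (0:ℝ), ∑ i : Fin k, p i * (d i) ^ (-α) < 1 := by
  set φ : ℝ → ℝ := fun a => ∑ i : Fin k, p i * (d i) ^ (-a) with hφ
  have hder : HasDerivAt φ (∑ i : Fin k, p i * -Real.log (d i)) 0 := by
    apply HasDerivAt.fun_sum
    intro i _
    have h1 : HasDerivAt (fun a : ℝ => (d i) ^ a) ((d i) ^ (-0:ℝ) * Real.log (d i)) (-0 : ℝ) :=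
      (Real.hasStrictDerivAt_const_rpow (hd i) (-0)).hasDerivAt
    have h3 := (h1.comp (0:ℝ) (hasDerivAt_neg (0:ℝ))).const_mul (p i)
    convert h3 using 1
    · rfl
    · rfl
    rw [neg_zero, Real.rpow_zero]; ring
  have hneg : (∑ i : Fin k, p i * -Real.log (d i)) < 0 := by
    have heq : ∑ i : Fin k, p i * -Real.log (d i) = -(∑ i : Fin k, p i * Real.log (d i)) := by
      rw [← Finset.sum_neg_distrib]
      exact Finset.sum_congr rfl fun i _ => by ring
    rw [heq]; linarith
  have hslope := hasDerivAt_iff_tendsto_slope.1 hder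
  have hslope' : Tendsto (slope φ 0) (𝓝[>] 0) (𝓝 (∑ i : Fin k, p i * -Real.log (d i))) :=
    hslope.mono_left (nhdsWithin_mono _ (fun x hx => ne_of_gt hx))
  have hev : ∀ᶠ a in 𝓝[>] (0:ℝ), slope φ 0 a < 0 :=
    hslope'.eventually (eventually_lt_nhds hneg)
  filter_upwards [hev, self_mem_nhdsWithin] with a ha ha'
  have ha0 : (0:ℝ) < a := ha'
  have hφ0 : φ 0 = 1 := by
    simp only [hφ, neg_zero, Real.rpow_zero, mul_one]
    exact hps
  have hs : slope φ 0 a = (φ a - 1) / a := by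
    rw [slope_def_field, hφ0, sub_zero]
  rw [hs] at ha
  have := mul_neg_of_neg_of_pos ha ha0
  rw [div_mul_cancel₀ _ (ne_of_gt ha0)] at this
  linarith [this]

/-- For every admissible IFS there are `M > 0` and `α ∈ (0,1)` such
that `N_{M,α}` is nonempty and invariant under the Markov operator. -/
theorem exists_invariant_Nset (β : ℝ) (hβ : 0 < β) (k : ℕ)
    (g : Fin k → ℝ → ℝ) (p : Fin k → ℝ)
    (hmeas : ∀ i, Measurable (g i)) (hadm : Admissible β g p) :
    ∃ M > (0 : ℝ), ∃ α ∈ Ioo (0 : ℝ) 1, (Nset M α).Nonempty ∧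
      ∀ μ ∈ Nset M α, markovOp g p μ ∈ Nset M α := by
  rcases Nat.eq_zero_or_pos k with hk0 | hk0
  · exfalso; have h := hadm.p_sum; subst hk0; simpa using h
  have hne : Nonempty (Fin k) := ⟨⟨0, hk0⟩⟩
  have hfinne : (Finset.univ : Finset (Fin k)).Nonempty := Finset.univ_nonempty
  set d : Fin k → ℝ := fun i => derivWithin (g i) (Icc (0:ℝ) 1) 0 with hddef
  set e : Fin k → ℝ := fun i => derivWithin (g i) (Icc (0:ℝ) 1) 1 with hedef
  have hdpos : ∀ i, 0 < d i := hadm.deriv0_pos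
  have hepos : ∀ i, 0 < e i := hadm.deriv1_pos
  obtain ⟨α, hαd, hαe, hα⟩ := ((sum_rpow_lt_one p d hdpos hadm.p_sum hadm.lyap0).and
    ((sum_rpow_lt_one p e hepos hadm.p_sum hadm.lyap1).and
      (Filter.eventually_mem_set.2 (Ioo_mem_nhdsGT_of_mem ⟨le_refl (0:ℝ), zero_lt_one⟩)))).exists
  have hα0 : 0 < α := hα.1
  have hα1 : α < 1 := hα.2
  -- scaling so the rpow sums are ≤ 1
  set cd := ∑ i : Fin k, p i * d i ^ (-α) with hcddef
  set ce := ∑ i : Fin k, p i * e i ^ (-α) with hcedef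
  have hcd0 : 0 < cd := Finset.sum_pos
    (fun i _ => mul_pos (hadm.p_pos i) (Real.rpow_pos_of_pos (hdpos i) _)) hfinne
  have hce0 : 0 < ce := Finset.sum_pos
    (fun i _ => mul_pos (hadm.p_pos i) (Real.rpow_pos_of_pos (hepos i) _)) hfinne
  set θd := cd ^ α⁻¹ with hθddef
  set θe := ce ^ α⁻¹ with hθedef
  have hθd0 : 0 < θd := Real.rpow_pos_of_pos hcd0 _
  have hθe0 : 0 < θe := Real.rpow_pos_of_pos hce0 _
  have hθd1 : θd < 1 := Real.rpow_lt_one hcd0.le hαd (by positivity)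
  have hθe1 : θe < 1 := Real.rpow_lt_one hce0.le hαe (by positivity)
  set t : Fin k → ℝ := fun i => θd * d i with htdef
  set u : Fin k → ℝ := fun i => θe * e i with hudef
  have htpos : ∀ i, 0 < t i := fun i => mul_pos hθd0 (hdpos i)
  have hupos : ∀ i, 0 < u i := fun i => mul_pos hθe0 (hepos i)
  have htlt : ∀ i, t i < d i := fun i => mul_lt_of_lt_one_left (hdpos i) hθd1
  have hult : ∀ i, u i < e i := fun i => mul_lt_of_lt_one_left (hepos i) hθe1
  have hkey : ∀ (c θ : ℝ) (v w : Fin k → ℝ), 0 < c → θ = c ^ α⁻¹ →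
      (∀ i, 0 < v i) → (∀ i, w i = θ * v i) → c = ∑ i : Fin k, p i * v i ^ (-α) →
      ∑ i : Fin k, p i * (w i) ^ (-α) ≤ 1 := by
    intro c θ v w hc hθ hv hw hcs
    have hθ0 : 0 < θ := hθ ▸ Real.rpow_pos_of_pos hc _
    have h2 : θ ^ (-α) = c⁻¹ := by
      rw [hθ, ← Real.rpow_mul hc.le]
      have : α⁻¹ * -α = -1 := by
        field_simp
      rw [this, Real.rpow_neg_one]
    have hcalc : ∑ i : Fin k, p i * (w i) ^ (-α) = θ ^ (-α) * ∑ i : Fin k, p i * v i ^ (-α) := by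
      rw [Finset.mul_sum]
      refine Finset.sum_congr rfl fun i _ => ?_
      rw [hw i, Real.mul_rpow hθ0.le (hv i).le]; ring
    rw [hcalc, ← hcs, h2, inv_mul_cancel₀ (ne_of_gt hc)]
  have hkey_t : ∑ i : Fin k, p i * (t i) ^ (-α) ≤ 1 :=
    hkey cd θd d t hcd0 hθddef hdpos (fun i => rfl) hcddef
  have hkey_u : ∑ i : Fin k, p i * (u i) ^ (-α) ≤ 1 :=
    hkey ce θe e u hce0 hθedef hepos (fun i => rfl) hcedef
  -- edge linear lower bounds
  choose γL hγLmem hγLbound using fun i =>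
    left_edge_bound hβ (hadm.cplus i).c1_left (hadm.cplus i).map_zero (htlt i)
  choose γR hγRmem hγRbound using fun i =>
    right_edge_bound hβ (hadm.cplus i).c1_right (hadm.cplus i).map_one (hult i)
  set γl := Finset.univ.inf' hfinne γL with hγldef
  set γr := Finset.univ.inf' hfinne γR with hγrdef
  have hγl0 : 0 < γl := (Finset.lt_inf'_iff hfinne).2 (fun i _ => (hγLmem i).1)
  have hγr0 : 0 < γr := (Finset.lt_inf'_iff hfinne).2 (fun i _ => (hγRmem i).1)
  have hγl1 : γl < 1 :=
    lt_of_le_of_lt (Finset.inf'_le _ (Finset.mem_univ ⟨0, hk0⟩)) (hγLmem _).2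
  have hγr1 : γr < 1 :=
    lt_of_le_of_lt (Finset.inf'_le _ (Finset.mem_univ ⟨0, hk0⟩)) (hγRmem _).2
  have hgl : ∀ i, ∀ x ∈ Icc (0:ℝ) γl, t i * x ≤ g i x := fun i x hx =>
    hγLbound i x ⟨hx.1, hx.2.trans (Finset.inf'_le _ (Finset.mem_univ i))⟩
  have hgr : ∀ i, ∀ x ∈ Icc (1-γr) (1:ℝ), u i * (1 - x) ≤ 1 - g i x := fun i x hx =>
    hγRbound i x ⟨by linarith [hx.1, sub_le_sub_left (Finset.inf'_le γR (Finset.mem_univ i) : γr ≤ γR i) (1:ℝ)], hx.2⟩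
  set tmin := Finset.univ.inf' hfinne t with htmindef
  set umin := Finset.univ.inf' hfinne u with humindef
  have htmin0 : 0 < tmin := (Finset.lt_inf'_iff hfinne).2 (fun i _ => htpos i)
  have humin0 : 0 < umin := (Finset.lt_inf'_iff hfinne).2 (fun i _ => hupos i)
  have htminle : ∀ i, tmin ≤ t i := fun i => Finset.inf'_le _ (Finset.mem_univ i)
  have huminle : ∀ i, umin ≤ u i := fun i => Finset.inf'_le _ (Finset.mem_univ i)
  set x₀ := min (tmin * γl) (min (umin * γr) 1) with hx₀def
  have hx₀pos : 0 < x₀ := lt_min (mul_pos htmin0 hγl0) (lt_min (mul_pos humin0 hγr0) one_pos)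
  have hx₀1 : x₀ ≤ 1 := (min_le_right _ _).trans (min_le_right _ _)
  have hx₀L : ∀ i, x₀ ≤ t i * γl := fun i =>
    (min_le_left _ _).trans (mul_le_mul_of_nonneg_right (htminle i) hγl0.le)
  have hx₀R : ∀ i, x₀ ≤ u i * γr := fun i =>
    ((min_le_right _ _).trans (min_le_left _ _)).trans
      (mul_le_mul_of_nonneg_right (huminle i) hγr0.le)
  set M := max 2 (x₀ ^ (-α)) with hMdef
  have hM2 : (2:ℝ) ≤ M := le_max_left _ _
  have hM0 : 0 < M := lt_of_lt_of_le two_pos hM2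
  refine ⟨M, hM0, α, hα, ?_, ?_⟩
  · -- N_{M,α} is nonempty : it contains δ_{1/2}
    refine ⟨Measure.dirac (1/2 : ℝ), ⟨⟨inferInstance, Measure.dirac_apply_of_mem (by norm_num)⟩, ?_⟩⟩
    intro x hx
    rcases le_or_gt (1/2 : ℝ) x with hhalf | hhalf
    · have hone : (1:ℝ) ≤ M * x ^ α := by
        have h1 : ((1:ℝ)/2) ^ α ≤ x ^ α := Real.rpow_le_rpow (by norm_num) hhalf hα0.le
        have h2 : ((1:ℝ)/2) ^ (1:ℝ) ≤ ((1:ℝ)/2) ^ α :=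
          Real.rpow_le_rpow_of_exponent_ge (by norm_num) (by norm_num) hα1.le
        rw [Real.rpow_one] at h2
        nlinarith
      have hle : ∀ s : Set ℝ, Measure.dirac (1/2 : ℝ) s ≤ ENNReal.ofReal (M * x ^ α) := by
        intro s
        calc Measure.dirac (1/2 : ℝ) s ≤ 1 := prob_le_one
          _ = ENNReal.ofReal 1 := ENNReal.ofReal_one.symm
          _ ≤ ENNReal.ofReal (M * x ^ α) := ENNReal.ofReal_le_ofReal hone
      exact ⟨hle _, hle _⟩
    · constructor
      · rw [Measure.dirac_apply' _ measurableSet_Icc,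
          indicator_of_notMem (by simp only [mem_Icc]; intro h; linarith [h.2])]
        exact zero_le
      · rw [Measure.dirac_apply' _ measurableSet_Icc,
          indicator_of_notMem (by simp only [mem_Icc]; intro h; linarith [h.1])]
        exact zero_le
  · -- invariance
    intro μ hμ
    obtain ⟨⟨hprob, hfull⟩, hbd⟩ := hμ
    haveI := hprob
    have hmker : ∀ s : Set ℝ, MeasurableSet s →
        markovOp g p μ s = ∑ i : Fin k, ENNReal.ofReal (p i) * μ (g i ⁻¹' s) := by
      intro s hs
      simp only [markovOp, Measure.finset_sum_apply, Measure.smul_apply, smul_eq_mul,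
        Measure.map_apply (hmeas _) hs]
    have hsum1 : ∑ i : Fin k, ENNReal.ofReal (p i) = 1 := by
      rw [← ENNReal.ofReal_sum_of_nonneg (fun i _ => (hadm.p_pos i).le), hadm.p_sum,
        ENNReal.ofReal_one]
    have hνuniv : markovOp g p μ univ = 1 := by
      rw [hmker _ MeasurableSet.univ]
      simp only [preimage_univ, measure_univ, mul_one]
      exact hsum1
    have hνprob : IsProbabilityMeasure (markovOp g p μ) := ⟨hνuniv⟩
    haveI := hνprob
    have hint : ∀ i, ∀ y ∈ Ioo (0:ℝ) 1, g i y ∈ Ioo (0:ℝ) 1 := by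
      intro i y hy
      have hyI : y ∈ Icc (0:ℝ) 1 := Ioo_subset_Icc_self hy
      have hmem := (hadm.cplus i).mapsTo hyI
      constructor
      · rcases hmem.1.lt_or_eq with h | h
        · exact h
        · exfalso
          have hy0 : y = 0 := (hadm.homeo i).2.1 hyI (left_mem_Icc.2 zero_le_one)
            (by rw [(hadm.cplus i).map_zero, ← h])
          linarith [hy.1]
      · rcases hmem.2.lt_or_eq with h | h
        · exact h
        · exfalso
          have hy1 : y = 1 := (hadm.homeo i).2.1 hyI (right_mem_Icc.2 zero_le_one)
            (by rw [(hadm.cplus i).map_one, h])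
          linarith [hy.2]
    have hcompl : μ ((Ioo (0:ℝ) 1)ᶜ) = 0 := by
      have h := measure_compl (μ := μ) (s := Ioo (0:ℝ) 1) measurableSet_Ioo (measure_ne_top μ _)
      rw [hfull, measure_univ, tsub_self] at h
      exact h
    have hνfull : markovOp g p μ (Ioo (0:ℝ) 1) = 1 := by
      rw [hmker _ measurableSet_Ioo]
      have hpre : ∀ i, μ (g i ⁻¹' (Ioo (0:ℝ) 1)) = 1 := by
        intro i
        refine le_antisymm prob_le_one ?_
        rw [← hfull]
        exact measure_mono (fun y hy => hint i y hy)
      simp only [hpre, mul_one]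
      exact hsum1
    refine ⟨⟨hνprob, hνfull⟩, ?_⟩
    intro x hx
    rcases lt_or_ge x x₀ with hxs | hxl
    · -- small x
      have main : ∀ (v : Fin k → ℝ) (hv : ∀ i, 0 < v i)
          (hvkey : ∑ i : Fin k, p i * (v i) ^ (-α) ≤ 1)
          (A : Fin k → Set ℝ)
          (hA : ∀ i, μ (A i) ≤ ENNReal.ofReal (M * (x / v i) ^ α)),
          ∑ i : Fin k, ENNReal.ofReal (p i) * μ (A i) ≤ ENNReal.ofReal (M * x ^ α) := by
        intro v hv hvkey A hA
        calc ∑ i : Fin k, ENNReal.ofReal (p i) * μ (A i)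
            ≤ ∑ i : Fin k, ENNReal.ofReal (p i) * ENNReal.ofReal (M * (x / v i) ^ α) :=
              Finset.sum_le_sum (fun i _ => mul_le_mul_right (hA i) _)
          _ = ENNReal.ofReal (∑ i : Fin k, p i * (M * (x / v i) ^ α)) := by
              rw [ENNReal.ofReal_sum_of_nonneg (fun i _ => mul_nonneg (hadm.p_pos i).le
                (mul_nonneg hM0.le (Real.rpow_nonneg (div_nonneg hx.1 (hv i).le) _)))]
              exact Finset.sum_congr rfl fun i _ => (ENNReal.ofReal_mul (hadm.p_pos i).le).symm
          _ ≤ ENNReal.ofReal (M * x ^ α) := by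
              apply ENNReal.ofReal_le_ofReal
              have heq : ∀ i : Fin k, p i * (M * (x / v i) ^ α)
                  = (M * x ^ α) * (p i * (v i) ^ (-α)) := by
                intro i
                rw [Real.div_rpow hx.1 (hv i).le, Real.rpow_neg (hv i).le, div_eq_mul_inv]
                ring
              rw [Finset.sum_congr rfl (fun i _ => heq i), ← Finset.mul_sum]
              nth_rewrite 2 [← mul_one (M * x ^ α)]
              exact mul_le_mul_of_nonneg_left hvkey
                (mul_nonneg hM0.le (Real.rpow_nonneg hx.1 _))
      constructor
      · -- left tail
        rw [hmker _ measurableSet_Icc]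
        refine main t htpos hkey_t _ (fun i => ?_)
        have h1 : μ (g i ⁻¹' (Icc 0 x)) = μ (g i ⁻¹' (Icc 0 x) ∩ Ioo 0 1) :=
          (measure_inter_conull hcompl).symm
        have hsubset : g i ⁻¹' (Icc 0 x) ∩ Ioo 0 1 ⊆ Icc 0 (x / t i) := by
          rintro y ⟨hgy, hy⟩
          have hgyx : g i y ≤ x := hgy.2
          refine ⟨hy.1.le, ?_⟩
          rcases le_or_gt y γl with hyγ | hyγ
          · have hty := hgl i y ⟨hy.1.le, hyγ⟩
            rw [le_div_iff₀ (htpos i)]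
            calc y * t i = t i * y := mul_comm _ _
              _ ≤ g i y := hty
              _ ≤ x := hgyx
          · exfalso
            have h2 : g i γl ≤ g i y :=
              (hadm.cplus i).mono ⟨hγl0.le, hγl1.le⟩ ⟨hy.1.le, hy.2.le⟩ hyγ.le
            have h3 : t i * γl ≤ g i γl := hgl i γl ⟨hγl0.le, le_refl _⟩
            linarith [hx₀L i]
        have hxt : x / t i ∈ Icc (0:ℝ) 1 := by
          refine ⟨div_nonneg hx.1 (htpos i).le, ?_⟩
          rw [div_le_one (htpos i)]
          calc x ≤ t i * γl := le_of_lt (lt_of_lt_of_le hxs (hx₀L i))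
            _ ≤ t i * 1 := mul_le_mul_of_nonneg_left hγl1.le (htpos i).le
            _ = t i := mul_one _
        calc μ (g i ⁻¹' (Icc 0 x)) = μ (g i ⁻¹' (Icc 0 x) ∩ Ioo 0 1) := h1
          _ ≤ μ (Icc 0 (x / t i)) := measure_mono hsubset
          _ ≤ ENNReal.ofReal (M * (x / t i) ^ α) := (hbd _ hxt).1
      · -- right tail
        rw [hmker _ measurableSet_Icc]
        refine main u hupos hkey_u _ (fun i => ?_)
        have h1 : μ (g i ⁻¹' (Icc (1-x) 1)) = μ (g i ⁻¹' (Icc (1-x) 1) ∩ Ioo 0 1) :=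
          (measure_inter_conull hcompl).symm
        have hsubset : g i ⁻¹' (Icc (1-x) 1) ∩ Ioo 0 1 ⊆ Icc (1 - x / u i) 1 := by
          rintro y ⟨hgy, hy⟩
          have hgyx : 1 - x ≤ g i y := hgy.1
          refine ⟨?_, hy.2.le⟩
          rcases le_or_gt (1-γr) y with hyγ | hyγ
          · have huy := hgr i y ⟨hyγ, hy.2.le⟩
            have : 1 - y ≤ x / u i := by
              rw [le_div_iff₀ (hupos i)]
              calc (1 - y) * u i = u i * (1 - y) := mul_comm _ _
                _ ≤ 1 - g i y := huy
                _ ≤ x := by linarith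
            linarith
          · exfalso
            have h2 : g i y ≤ g i (1-γr) := (hadm.cplus i).mono ⟨hy.1.le, hy.2.le⟩
              ⟨by linarith, by linarith⟩ hyγ.le
            have h3 : u i * (1 - (1-γr)) ≤ 1 - g i (1-γr) :=
              hgr i (1-γr) ⟨le_refl _, by linarith⟩
            have h4 : u i * γr ≤ 1 - g i (1-γr) := by
              have : 1 - (1-γr) = γr := by ring
              rwa [this] at h3
            linarith [hx₀R i]
        have hxu : x / u i ∈ Icc (0:ℝ) 1 := by
          refine ⟨div_nonneg hx.1 (hupos i).le, ?_⟩
          rw [div_le_one (hupos i)]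
          calc x ≤ u i * γr := le_of_lt (lt_of_lt_of_le hxs (hx₀R i))
            _ ≤ u i * 1 := mul_le_mul_of_nonneg_left hγr1.le (hupos i).le
            _ = u i := mul_one _
        calc μ (g i ⁻¹' (Icc (1-x) 1)) = μ (g i ⁻¹' (Icc (1-x) 1) ∩ Ioo 0 1) := h1
          _ ≤ μ (Icc (1 - x / u i) 1) := measure_mono hsubset
          _ ≤ ENNReal.ofReal (M * (x / u i) ^ α) := (hbd _ hxu).2
    · -- large x
      have hone : (1:ℝ) ≤ M * x ^ α := by
        have h1 : x₀ ^ α ≤ x ^ α := Real.rpow_le_rpow hx₀pos.le hxl hα0.le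
        have h2 : x₀ ^ (-α) * x₀ ^ α = 1 := by
          rw [← Real.rpow_add hx₀pos]; simp
        have h3 : x₀ ^ (-α) ≤ M := le_max_right _ _
        nlinarith [Real.rpow_nonneg hx₀pos.le α, Real.rpow_pos_of_pos hx₀pos (-α)]
      have hle : ∀ s : Set ℝ, markovOp g p μ s ≤ ENNReal.ofReal (M * x ^ α) := by
        intro s
        calc markovOp g p μ s ≤ 1 := prob_le_one
          _ = ENNReal.ofReal 1 := ENNReal.ofReal_one.symm
          _ ≤ ENNReal.ofReal (M * x ^ α) := ENNReal.ofReal_le_ofReal hone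
      exact ⟨hle _, hle _⟩


end
end

section
/- Let (S,p) = ({S_1,…,S_k}, p) and (T,q) = ({T_1,…,T_k}, q) be Iterated Function Systems on [0,1] with continuous maps, and let P_S, P_T be their Markov operators. Then for all finite Borel measures μ_1, μ_2 on [0,1]: ‖P_S(μ_1 − μ_2) − P_T(μ_1 − μ_2)‖_FM ≤ (μ_1([0,1]) + μ_2([0,1])) · d_0((S,p),(T,q)). -/
open MeasureTheory Set Filter Topology

noncomputable section

section FMAux

lemma integrable_of_abs_le_one (f : ℝ → ℝ) (hm : Measurable f) (hb : ∀ x, |f x| ≤ 1)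
    (ν : Measure ℝ) [IsFiniteMeasure ν] : Integrable f ν :=
  (integrable_const (1 : ℝ)).mono' hm.aestronglyMeasurable
    (ae_of_all _ fun x => by simpa using hb x)

lemma isFiniteMeasure_markovOp {k : ℕ} (g : Fin k → ℝ → ℝ) (r : Fin k → ℝ)
    (μ : Measure ℝ) [IsFiniteMeasure μ] : IsFiniteMeasure (markovOp g r μ) := by
  refine ⟨?_⟩
  simp only [markovOp, Measure.coe_finset_sum, Finset.sum_apply, Measure.smul_apply,
    smul_eq_mul]
  exact ENNReal.sum_lt_top.2 fun i _ =>
    ENNReal.mul_lt_top ENNReal.ofReal_lt_top (measure_lt_top _ _)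

lemma integral_markovOp {k : ℕ} (g : Fin k → ℝ → ℝ) (hg : ∀ i, Measurable (g i))
    (r : Fin k → ℝ) (hr : ∀ i, 0 ≤ r i) (μ : Measure ℝ) [IsFiniteMeasure μ]
    (f : ℝ → ℝ) (hm : Measurable f) (hb : ∀ x, |f x| ≤ 1) :
    ∫ x, f x ∂(markovOp g r μ) = ∑ i : Fin k, r i * ∫ x, f (g i x) ∂μ := by
  rw [markovOp, integral_finset_sum_measure ?_]
  · refine Finset.sum_congr rfl fun i _ => ?_
    rw [integral_smul_measure, ENNReal.toReal_ofReal (hr i),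
      integral_map (hg i).aemeasurable hm.aestronglyMeasurable, smul_eq_mul]
  · intro i _
    haveI : IsFiniteMeasure (ENNReal.ofReal (r i) • Measure.map (g i) μ) :=
      (Measure.map (g i) μ).smul_finite ENNReal.ofReal_ne_top
    exact integrable_of_abs_le_one f hm hb _

lemma supOn_diff_bddAbove {S T : ℝ → ℝ}
    (hS : MapsTo S (Icc (0 : ℝ) 1) (Icc (0 : ℝ) 1))
    (hT : MapsTo T (Icc (0 : ℝ) 1) (Icc (0 : ℝ) 1)) :
    BddAbove ((fun x => |S x - T x|) '' Icc (0 : ℝ) 1) := by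
  refine ⟨1, ?_⟩
  rintro y ⟨x, hx, rfl⟩
  have h1 := hS hx
  have h2 := hT hx
  simp only [mem_Icc] at h1 h2
  rw [abs_le]
  constructor <;> linarith

lemma le_supOn_diff {S T : ℝ → ℝ}
    (hS : MapsTo S (Icc (0 : ℝ) 1) (Icc (0 : ℝ) 1))
    (hT : MapsTo T (Icc (0 : ℝ) 1) (Icc (0 : ℝ) 1))
    {x : ℝ} (hx : x ∈ Icc (0 : ℝ) 1) :
    |S x - T x| ≤ supOn (Icc (0 : ℝ) 1) (fun y => S y - T y) :=
  le_csSup (supOn_diff_bddAbove hS hT) ⟨x, hx, rfl⟩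

lemma supOn_diff_nonneg {S T : ℝ → ℝ}
    (hS : MapsTo S (Icc (0 : ℝ) 1) (Icc (0 : ℝ) 1))
    (hT : MapsTo T (Icc (0 : ℝ) 1) (Icc (0 : ℝ) 1)) :
    0 ≤ supOn (Icc (0 : ℝ) 1) (fun y => S y - T y) :=
  le_trans (abs_nonneg _) (le_supOn_diff hS hT (by norm_num : (0:ℝ) ∈ Icc (0:ℝ) 1))

lemma markov_diff_bound {k : ℕ} (S T : Fin k → ℝ → ℝ) (p q : Fin k → ℝ)
    (hSm : ∀ i, Measurable (S i))
    (hSt : ∀ i, MapsTo (S i) (Icc (0 : ℝ) 1) (Icc (0 : ℝ) 1))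
    (hTm : ∀ i, Measurable (T i))
    (hTt : ∀ i, MapsTo (T i) (Icc (0 : ℝ) 1) (Icc (0 : ℝ) 1))
    (hp : ProbVec p) (hq : ProbVec q)
    (μ : Measure ℝ) [IsFiniteMeasure μ] (hs : μ (Icc (0 : ℝ) 1)ᶜ = 0)
    (f : ℝ → ℝ) (hb : ∀ x, |f x| ≤ 1) (hl : LipschitzWith 1 f) :
    |(∫ x, f x ∂(markovOp S p μ)) - ∫ x, f x ∂(markovOp T q μ)|
      ≤ (μ (Icc (0 : ℝ) 1)).toReal * dzero S T p q := by
  have hm : Measurable f := hl.continuous.measurable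
  have hMuniv : μ Set.univ = μ (Icc (0 : ℝ) 1) := by
    rw [← measure_add_measure_compl (measurableSet_Icc (a := (0:ℝ)) (b := 1)), hs, add_zero]
  set M := (μ (Icc (0 : ℝ) 1)).toReal with hM
  have hM0 : 0 ≤ M := ENNReal.toReal_nonneg
  have hμae : ∀ᵐ x ∂μ, x ∈ Icc (0 : ℝ) 1 := by
    rw [ae_iff]
    have hset : {x : ℝ | ¬ x ∈ Icc (0:ℝ) 1} = (Icc (0:ℝ) 1)ᶜ := rfl
    rw [hset]
    exact hs
  rw [integral_markovOp S hSm p hp.1 μ f hm hb, integral_markovOp T hTm q hq.1 μ f hm hb,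
    ← Finset.sum_sub_distrib]
  refine le_trans (Finset.abs_sum_le_sum_abs _ _) ?_
  rw [dzero, Finset.mul_sum]
  refine Finset.sum_le_sum fun i _ => ?_
  set A := ∫ x, f (S i x) ∂μ
  set B := ∫ x, f (T i x) ∂μ
  set si := supOn (Icc (0 : ℝ) 1) (fun x => S i x - T i x) with hsi
  have hsi0 : 0 ≤ si := supOn_diff_nonneg (hSt i) (hTt i)
  -- bound |A| ≤ M
  have hA : |A| ≤ M := by
    have := norm_integral_le_of_norm_le_const (μ := μ)
      (f := fun x => f (S i x)) (C := 1) (ae_of_all _ fun x => by simpa using hb (S i x))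
    rw [Real.norm_eq_abs] at this
    rw [hM, ← hMuniv]
    have h' : |A| ≤ μ.real univ := by simpa using this
    exact h'
  -- bound |A - B| ≤ si * M
  have hintS : Integrable (fun x => f (S i x)) μ :=
    integrable_of_abs_le_one _ (hm.comp (hSm i)) (fun x => hb _) μ
  have hintT : Integrable (fun x => f (T i x)) μ :=
    integrable_of_abs_le_one _ (hm.comp (hTm i)) (fun x => hb _) μ
  have hAB : |A - B| ≤ si * M := by
    have hsub : A - B = ∫ x, (f (S i x) - f (T i x)) ∂μ := (integral_sub hintS hintT).symm
    rw [hsub]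
    have hbd : ∀ᵐ x ∂μ, ‖f (S i x) - f (T i x)‖ ≤ si := by
      filter_upwards [hμae] with x hx
      rw [Real.norm_eq_abs]
      calc |f (S i x) - f (T i x)| ≤ |S i x - T i x| := by
            have := hl.dist_le_mul (S i x) (T i x)
            simpa [Real.dist_eq] using this
        _ ≤ si := le_supOn_diff (hSt i) (hTt i) hx
    have := norm_integral_le_of_norm_le_const (μ := μ)
      (f := fun x => f (S i x) - f (T i x)) hbd
    rw [Real.norm_eq_abs] at this
    rw [hM, ← hMuniv]
    exact this
  have hq1 : q i ≤ 1 := by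
    rw [← hq.2]
    exact Finset.single_le_sum (fun j _ => hq.1 j) (Finset.mem_univ i)
  calc |p i * A - q i * B| = |(p i - q i) * A + q i * (A - B)| := by ring_nf
    _ ≤ |(p i - q i) * A| + |q i * (A - B)| := abs_add_le _ _
    _ = |p i - q i| * |A| + q i * |A - B| := by
        rw [abs_mul, abs_mul, abs_of_nonneg (hq.1 i)]
    _ ≤ |p i - q i| * M + 1 * (si * M) := by
        refine add_le_add (mul_le_mul_of_nonneg_left hA (abs_nonneg _)) ?_
        exact mul_le_mul hq1 hAB (abs_nonneg _) zero_le_one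
    _ = M * (|p i - q i| + si) := by ring

end FMAux

/-- Fortet–Mourier estimate for the difference of two Markov
operators applied to a difference of finite measures:
`‖(P_S - P_T)(μ₁ - μ₂)‖_FM ≤ (μ₁([0,1]) + μ₂([0,1])) ⬝ d₀((S,p),(T,q))`.
(The signed measure `(P_S - P_T)(μ₁ - μ₂)` is written as the difference of the
two nonnegative measures `P_S μ₁ + P_T μ₂` and `P_T μ₁ + P_S μ₂`.) -/
theorem FM_estimate_markov_difference (k : ℕ)
    (S T : Fin k → ℝ → ℝ) (p q : Fin k → ℝ)
    (hSm : ∀ i, Measurable (S i)) (hSc : ∀ i, ContinuousOn (S i) (Icc (0 : ℝ) 1))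
    (hSt : ∀ i, MapsTo (S i) (Icc (0 : ℝ) 1) (Icc (0 : ℝ) 1))
    (hTm : ∀ i, Measurable (T i)) (hTc : ∀ i, ContinuousOn (T i) (Icc (0 : ℝ) 1))
    (hTt : ∀ i, MapsTo (T i) (Icc (0 : ℝ) 1) (Icc (0 : ℝ) 1))
    (hp : ProbVec p) (hq : ProbVec q)
    (μ₁ μ₂ : Measure ℝ) (h1 : IsFiniteMeasure μ₁) (h2 : IsFiniteMeasure μ₂)
    (hs1 : μ₁ (Icc (0 : ℝ) 1)ᶜ = 0) (hs2 : μ₂ (Icc (0 : ℝ) 1)ᶜ = 0) :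
    FMdist (markovOp S p μ₁ + markovOp T q μ₂) (markovOp T q μ₁ + markovOp S p μ₂)
      ≤ ((μ₁ (Icc (0 : ℝ) 1)).toReal + (μ₂ (Icc (0 : ℝ) 1)).toReal) *
        dzero S T p q := by
  have hm1 : IsFiniteMeasure (markovOp S p μ₁) := isFiniteMeasure_markovOp _ _ _
  have hm2 : IsFiniteMeasure (markovOp T q μ₁) := isFiniteMeasure_markovOp _ _ _
  have hm3 : IsFiniteMeasure (markovOp S p μ₂) := isFiniteMeasure_markovOp _ _ _
  have hm4 : IsFiniteMeasure (markovOp T q μ₂) := isFiniteMeasure_markovOp _ _ _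
  have hd0 : 0 ≤ dzero S T p q := by
    refine Finset.sum_nonneg fun i _ => ?_
    exact add_nonneg (abs_nonneg _) (supOn_diff_nonneg (hSt i) (hTt i))
  have hrhs : 0 ≤ ((μ₁ (Icc (0 : ℝ) 1)).toReal + (μ₂ (Icc (0 : ℝ) 1)).toReal) *
      dzero S T p q :=
    mul_nonneg (add_nonneg ENNReal.toReal_nonneg ENNReal.toReal_nonneg) hd0
  refine Real.sSup_le ?_ hrhs
  rintro r ⟨f, hb, hl, rfl⟩
  have hm : Measurable f := hl.continuous.measurable
  have hint : ∀ (ν : Measure ℝ), IsFiniteMeasure ν → Integrable f ν :=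
    fun ν hν => @integrable_of_abs_le_one f hm hb ν hν
  rw [integral_add_measure (hint _ hm1) (hint _ hm4),
    integral_add_measure (hint _ hm2) (hint _ hm3)]
  have h₁ := markov_diff_bound S T p q hSm hSt hTm hTt hp hq μ₁ hs1 f hb hl
  have h₂ := markov_diff_bound S T p q hSm hSt hTm hTt hp hq μ₂ hs2 f hb hl
  have e₁ := (abs_le.1 h₁).2
  have e₂ := (abs_le.1 h₂).1
  ring_nf
  ring_nf at e₁ e₂
  nlinarith [e₁, e₂]

end
end

section
/- Let (S,p) and (S_n,p), n ∈ ℕ, be Iterated Function Systems on [0,1] with continuous maps such that d_0((S_n,p),(S,p)) → 0 as n → ∞, and suppose that for some fixed M > 0 and α ∈ (0,1), each (S_n,p) has an invariant measure μ_n ∈ N_{M,α}. Then (μ_n) admits a subsequence converging weakly to a measure μ which is invariant for the Markov operator of (S,p); moreover μ ∈ N_{M,α}. -/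
open MeasureTheory Set Filter Topology
open scoped ENNReal NNReal BoundedContinuousFunction

noncomputable section

/-! ### Auxiliary lemmas for Statement 6 -/

section Aux6

/-- Helly-type selection: a subsequence along which the CDFs converge at all rationals. -/
lemma helly_exists (μ : ℕ → Measure ℝ) (hprob : ∀ n, IsProbabilityMeasure (μ n)) :
    ∃ φ : ℕ → ℕ, StrictMono φ ∧ ∃ G : ℚ → ℝ,
      Monotone G ∧ (∀ q, G q ∈ Icc (0:ℝ) 1) ∧
      ∀ q : ℚ, Tendsto (fun n => (μ (φ n) (Iic (q:ℝ))).toReal) atTop (𝓝 (G q)) := by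
  have hmem : ∀ n (q : ℚ), (μ n (Iic (q:ℝ))).toReal ∈ Icc (0:ℝ) 1 := by
    intro n q
    constructor
    · exact ENNReal.toReal_nonneg
    · have h1 : μ n (Iic (q:ℝ)) ≤ 1 := prob_le_one
      calc (μ n (Iic (q:ℝ))).toReal ≤ (1 : ℝ≥0∞).toReal :=
            ENNReal.toReal_mono ENNReal.one_ne_top h1
        _ = 1 := by simp
  let X : ℕ → (ℚ → Icc (0:ℝ) 1) := fun n q => ⟨(μ n (Iic (q:ℝ))).toReal, hmem n q⟩
  obtain ⟨L, φ, hφ, hL⟩ := CompactSpace.tendsto_subseq X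
  refine ⟨φ, hφ, fun q => (L q : ℝ), ?_, fun q => (L q).2, ?_⟩
  · -- monotone
    intro q r hqr
    have hcoord : ∀ s : ℚ, Tendsto (fun n => ((X (φ n)) s : ℝ)) atTop (𝓝 (L s : ℝ)) := by
      intro s
      have h1 : Tendsto (fun n => X (φ n) s) atTop (𝓝 (L s)) :=
        ((continuous_apply s).tendsto L).comp hL
      exact (continuous_subtype_val.tendsto (L s)).comp h1
    refine le_of_tendsto_of_tendsto' (hcoord q) (hcoord r) ?_
    intro n
    exact ENNReal.toReal_mono (measure_ne_top _ _)
      (measure_mono (Iic_subset_Iic.2 (by exact_mod_cast hqr)))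
  · intro q
    have h1 : Tendsto (fun n => X (φ n) q) atTop (𝓝 (L q)) :=
      ((continuous_apply q).tendsto L).comp hL
    exact (continuous_subtype_val.tendsto (L q)).comp h1

variable {G : ℚ → ℝ}

/-- The right-continuous regularization of a monotone bounded function on the rationals. -/
def hellyF (G : ℚ → ℝ) (hG : Monotone G) (h0 : ∀ q, 0 ≤ G q) : StieltjesFunction ℝ where
  toFun x := sInf (G '' {q : ℚ | x < (q:ℝ)})
  mono' := by
    intro x y hxy
    have hne : (G '' {q : ℚ | y < (q:ℝ)}).Nonempty := by
      obtain ⟨q, hq⟩ := exists_rat_gt y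
      exact ⟨G q, ⟨q, hq, rfl⟩⟩
    refine csInf_le_csInf ?_ hne (image_mono ?_)
    · exact ⟨0, fun r ⟨q, _, hq⟩ => hq ▸ h0 q⟩
    · intro q hq
      exact lt_of_le_of_lt hxy hq
  right_continuous' := by
    intro x
    rw [Metric.continuousWithinAt_iff]
    intro ε hε
    have hne : (G '' {q : ℚ | x < (q:ℝ)}).Nonempty := by
      obtain ⟨q, hq⟩ := exists_rat_gt x
      exact ⟨G q, ⟨q, hq, rfl⟩⟩
    have hbd : BddBelow (G '' {q : ℚ | x < (q:ℝ)}) := ⟨0, fun r ⟨q, _, hq⟩ => hq ▸ h0 q⟩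
    have hlt : sInf (G '' {q : ℚ | x < (q:ℝ)}) < sInf (G '' {q : ℚ | x < (q:ℝ)}) + ε :=
      lt_add_of_pos_right _ hε
    obtain ⟨r, ⟨q, hq, rfl⟩, hrlt⟩ := exists_lt_of_csInf_lt hne hlt
    have hq' : x < (q:ℝ) := hq
    refine ⟨(q : ℝ) - x, by linarith, ?_⟩
    intro y hy hdist
    have hyq : y < (q : ℝ) := by
      rw [Real.dist_eq, abs_lt] at hdist
      rcases hdist with ⟨_, h2⟩
      linarith
    have hxy : x ≤ y := hy
    -- F y ≤ G q and F x ≤ F y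
    have hFy_le : sInf (G '' {q' : ℚ | y < (q':ℝ)}) ≤ G q := by
      refine csInf_le ⟨0, fun r ⟨q', _, hq'⟩ => hq' ▸ h0 q'⟩ ⟨q, hyq, rfl⟩
    have hFx_le_Fy : sInf (G '' {q' : ℚ | x < (q':ℝ)}) ≤ sInf (G '' {q' : ℚ | y < (q':ℝ)}) := by
      have hne' : (G '' {q' : ℚ | y < (q':ℝ)}).Nonempty := by
        obtain ⟨q', hq'⟩ := exists_rat_gt y
        exact ⟨G q', ⟨q', hq', rfl⟩⟩
      refine csInf_le_csInf hbd hne' (image_mono ?_)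
      intro q' hq'
      exact lt_of_le_of_lt hxy hq'
    rw [Real.dist_eq, abs_lt]
    constructor <;> [linarith [hFy_le.trans hrlt.le]; linarith [hFy_le.trans hrlt.le]]

lemma hellyF_le (hG : Monotone G) (h0 : ∀ q, 0 ≤ G q) {x : ℝ} {q : ℚ} (h : x < (q:ℝ)) :
    hellyF G hG h0 x ≤ G q :=
  csInf_le ⟨0, fun r ⟨q', _, hq'⟩ => hq' ▸ h0 q'⟩ ⟨q, h, rfl⟩

lemma le_hellyF (hG : Monotone G) (h0 : ∀ q, 0 ≤ G q) {x : ℝ} {q : ℚ} (h : (q:ℝ) ≤ x) :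
    G q ≤ hellyF G hG h0 x := by
  refine le_csInf ?_ ?_
  · obtain ⟨q', hq'⟩ := exists_rat_gt x
    exact ⟨G q', ⟨q', hq', rfl⟩⟩
  · rintro r ⟨q', hq', rfl⟩
    exact hG (by exact_mod_cast h.trans_lt hq' |>.le)

lemma hellyF_nonneg (hG : Monotone G) (h0 : ∀ q, 0 ≤ G q) (x : ℝ) :
    0 ≤ hellyF G hG h0 x := by
  refine le_csInf ?_ ?_
  · obtain ⟨q', hq'⟩ := exists_rat_gt x
    exact ⟨G q', ⟨q', hq', rfl⟩⟩
  · rintro r ⟨q', _, rfl⟩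
    exact h0 q'

/-- Convergence of CDFs at continuity points of the limit. -/
lemma tendsto_cdf_at_cont (μ : ℕ → Measure ℝ)
    (hfin : ∀ n, IsFiniteMeasure (μ n))
    (hG : Monotone G) (h0 : ∀ q, 0 ≤ G q)
    (hconv : ∀ q : ℚ, Tendsto (fun n => (μ n (Iic (q:ℝ))).toReal) atTop (𝓝 (G q)))
    {t : ℝ} (ht : ContinuousAt (hellyF G hG h0) t) :
    Tendsto (fun n => (μ n (Iic t)).toReal) atTop (𝓝 (hellyF G hG h0 t)) := by
  set F := hellyF G hG h0 with hF
  rw [Metric.tendsto_nhds]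
  intro ε hε
  -- upper bound: rational q > t with G q < F t + ε/2
  have hne : (G '' {q : ℚ | t < (q:ℝ)}).Nonempty := by
    obtain ⟨q, hq⟩ := exists_rat_gt t
    exact ⟨G q, ⟨q, hq, rfl⟩⟩
  have hlt : sInf (G '' {q : ℚ | t < (q:ℝ)}) < F t + ε / 2 := by
    have : sInf (G '' {q : ℚ | t < (q:ℝ)}) = F t := rfl
    rw [this]; linarith
  obtain ⟨r, ⟨q, hqmem, rfl⟩, hrlt⟩ := exists_lt_of_csInf_lt hne hlt
  have hqgt : t < (q:ℝ) := hqmem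
  -- lower bound: continuity gives a rational s < t with G s > F t - ε/2
  have hcont := ht
  rw [Metric.continuousAt_iff] at hcont
  obtain ⟨δ, hδ, hδ'⟩ := hcont (ε / 4) (by linarith)
  obtain ⟨s, hs1, hs2⟩ := exists_rat_btwn (show t - δ / 2 < t by linarith)
  have hz : F (t - δ / 2) ≤ G s := hellyF_le hG h0 hs1
  have hFz : |F (t - δ / 2) - F t| < ε / 4 := by
    have := hδ' (x := t - δ / 2) (by rw [Real.dist_eq]; rw [abs_lt]; constructor <;> linarith)
    rwa [Real.dist_eq] at this
  have hGs_lb : F t - ε / 4 < G s := by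
    have h1 : F t - ε / 4 < F (t - δ / 2) := by
      rw [abs_lt] at hFz; linarith [hFz.1]
    linarith
  -- eventual bounds
  have hq_ev := (hconv q).eventually (eventually_abs_sub_lt (G q) (show (0:ℝ) < ε/2 by linarith))
  have hs_ev := (hconv s).eventually (eventually_abs_sub_lt (G s) (show (0:ℝ) < ε/4 by linarith))
  filter_upwards [hq_ev, hs_ev] with n hn1 hn2
  have hmono_n : ∀ a b : ℝ, a ≤ b → (μ n (Iic a)).toReal ≤ (μ n (Iic b)).toReal := by
    intro a b hab
    exact ENNReal.toReal_mono (measure_ne_top _ _) (measure_mono (Iic_subset_Iic.2 hab))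
  have h_upper : (μ n (Iic t)).toReal ≤ (μ n (Iic (q:ℝ))).toReal := hmono_n _ _ hqgt.le
  have h_lower : (μ n (Iic (s:ℝ))).toReal ≤ (μ n (Iic t)).toReal := hmono_n _ _ hs2.le
  rw [abs_lt] at hn1 hn2
  have hFt_le : F t ≤ G q := hellyF_le hG h0 hqgt
  rw [Real.dist_eq, abs_lt]
  constructor
  · -- F t - ... < Fn t
    have : G s - ε / 4 < (μ n (Iic (s:ℝ))).toReal := by linarith [hn2.1]
    linarith
  · have : (μ n (Iic (q:ℝ))).toReal < G q + ε / 2 := by linarith [hn1.2]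
    linarith

/-- Finite unions of half-open cells: convergence of measures. -/
lemma tendsto_measure_finset_union (μ : ℕ → Measure ℝ) (ν : Measure ℝ)
    (hμfin : ∀ n, IsFiniteMeasure (μ n)) (hνfin : IsFiniteMeasure ν)
    (P : ℝ → Prop)
    (hcell : ∀ a b : ℝ, P a → P b →
      Tendsto (fun n => (μ n (Ioc a b)).toReal) atTop (𝓝 ((ν (Ioc a b)).toReal))) :
    ∀ (m : ℕ) (s : Finset (ℝ × ℝ)), s.card ≤ m → (∀ c ∈ s, P c.1 ∧ P c.2) →
      Tendsto (fun n => (μ n (⋃ c ∈ s, Ioc c.1 c.2)).toReal) atTop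
        (𝓝 ((ν (⋃ c ∈ s, Ioc c.1 c.2)).toReal)) := by
  intro m
  induction m with
  | zero =>
    intro s hcard _
    have : s = ∅ := Finset.card_eq_zero.mp (Nat.le_zero.mp hcard)
    subst this
    simp only [Finset.notMem_empty, iUnion_of_empty, iUnion_empty, measure_empty,
      ENNReal.toReal_zero]
    exact tendsto_const_nhds
  | succ m ih =>
    intro s hcard hP
    rcases s.eq_empty_or_nonempty with rfl | ⟨c, hc⟩
    · simp only [Finset.notMem_empty, iUnion_of_empty, iUnion_empty, measure_empty,
        ENNReal.toReal_zero]
      exact tendsto_const_nhds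
    · set s' := s.erase c with hs'
      have hins : s = insert c s' := by rw [hs', Finset.insert_erase hc]
      have hcard' : s'.card ≤ m := by
        have h1 : s'.card = s.card - 1 := by rw [hs']; exact Finset.card_erase_of_mem hc
        have h2 : 0 < s.card := Finset.card_pos.mpr ⟨c, hc⟩
        omega
      set A := Ioc c.1 c.2 with hA
      set B := ⋃ d ∈ s', Ioc d.1 d.2 with hB
      have hBmeas : MeasurableSet B := by
        exact s'.measurableSet_biUnion (fun d _ => measurableSet_Ioc)
      have hUnion : (⋃ d ∈ s, Ioc d.1 d.2) = A ∪ B := by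
        rw [hins]
        ext x
        simp only [mem_iUnion, exists_prop, Finset.mem_insert, mem_union, hA, hB]
        constructor
        · rintro ⟨d, (rfl | hd), hx⟩
          · exact Or.inl hx
          · exact Or.inr ⟨d, hd, hx⟩
        · rintro (hx | hx)
          · exact ⟨c, Or.inl rfl, hx⟩
          · obtain ⟨d, hd, hx⟩ := hx
            exact ⟨d, Or.inr hd, hx⟩
      -- the intersection as a union of cells
      set s'' := s'.image (fun d => (max c.1 d.1, min c.2 d.2)) with hs''
      have hAB : A ∩ B = ⋃ d ∈ s'', Ioc d.1 d.2 := by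
        rw [hB, hs'']
        rw [Set.inter_iUnion₂]
        ext x
        simp only [mem_iUnion, exists_prop, Finset.mem_image]
        constructor
        · rintro ⟨d, hd, hx⟩
          refine ⟨(max c.1 d.1, min c.2 d.2), ⟨d, hd, rfl⟩, ?_⟩
          rwa [← Set.Ioc_inter_Ioc]
        · rintro ⟨e, ⟨d, hd, rfl⟩, hx⟩
          refine ⟨d, hd, ?_⟩
          rwa [← Set.Ioc_inter_Ioc] at hx
      have hcard'' : s''.card ≤ m := le_trans (Finset.card_image_le) hcard'
      have hP' : ∀ d ∈ s', P d.1 ∧ P d.2 := fun d hd => hP d (hins ▸ Finset.mem_insert_of_mem hd)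
      have hP'' : ∀ d ∈ s'', P d.1 ∧ P d.2 := by
        rintro e he
        rw [hs''] at he
        obtain ⟨d, hd, rfl⟩ := Finset.mem_image.mp he
        have hPc := hP c hc
        have hPd := hP' d hd
        constructor
        · rcases max_choice c.1 d.1 with h | h <;> rw [h]
          exacts [hPc.1, hPd.1]
        · rcases min_choice c.2 d.2 with h | h <;> rw [h]
          exacts [hPc.2, hPd.2]
      have hIH_B := ih s' hcard' hP'
      have hIH_AB := ih s'' hcard'' hP''
      have hA_tendsto := hcell c.1 c.2 (hP c hc).1 (hP c hc).2
      rw [← hAB] at hIH_AB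
      -- measure identity
      have hkey : ∀ (ρ : Measure ℝ) (_ : IsFiniteMeasure ρ),
          (ρ (A ∪ B)).toReal = (ρ A).toReal + (ρ B).toReal - (ρ (A ∩ B)).toReal := by
        intro ρ hρ
        have h1 : ρ (A ∪ B) + ρ (A ∩ B) = ρ A + ρ B := measure_union_add_inter A hBmeas
        have h2 : (ρ (A ∪ B)).toReal + (ρ (A ∩ B)).toReal = (ρ A).toReal + (ρ B).toReal := by
          rw [← ENNReal.toReal_add (measure_ne_top _ _) (measure_ne_top _ _),
            ← ENNReal.toReal_add (measure_ne_top _ _) (measure_ne_top _ _), h1]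
        linarith
      have hconv' : Tendsto (fun n => (μ n A).toReal + (μ n B).toReal - (μ n (A ∩ B)).toReal)
          atTop (𝓝 ((ν A).toReal + (ν B).toReal - (ν (A ∩ B)).toReal)) :=
        (hA_tendsto.add hIH_B).sub hIH_AB
      rw [hUnion, hkey ν hνfin]
      refine hconv'.congr ?_
      intro n
      rw [← hkey (μ n) (hμfin n)]

lemma markov_isProbability {k : ℕ} (g : Fin k → ℝ → ℝ) (hg : ∀ i, Measurable (g i))
    (p : Fin k → ℝ) (hp : ProbVec p) (m : Measure ℝ) [IsProbabilityMeasure m] :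
    IsProbabilityMeasure (markovOp g p m) := by
  constructor
  rw [markovOp, Measure.finset_sum_apply]
  have : ∀ i : Fin k, (ENNReal.ofReal (p i) • Measure.map (g i) m) univ = ENNReal.ofReal (p i) := by
    intro i
    rw [Measure.smul_apply, Measure.map_apply (hg i) MeasurableSet.univ]
    simp
  rw [Finset.sum_congr rfl (fun i _ => this i), ← ENNReal.ofReal_sum_of_nonneg (fun i _ => hp.1 i),
    hp.2, ENNReal.ofReal_one]

lemma markov_integral {k : ℕ} (g : Fin k → ℝ → ℝ) (hg : ∀ i, Measurable (g i)) (p : Fin k → ℝ)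
    (hp : ∀ i, 0 ≤ p i) (m : Measure ℝ) [IsFiniteMeasure m] (f : ℝ → ℝ)
    (hfm : Measurable f) (C : ℝ) (hfb : ∀ x, ‖f x‖ ≤ C) :
    ∫ x, f x ∂(markovOp g p m) = ∑ i : Fin k, p i * ∫ x, f (g i x) ∂m := by
  have hint : ∀ i : Fin k, Integrable f (Measure.map (g i) m) := by
    intro i
    exact (integrable_const C).mono' hfm.aestronglyMeasurable (Eventually.of_forall hfb)
  rw [markovOp, integral_finset_sum_measure (fun i _ =>
    (hint i).smul_measure ENNReal.ofReal_ne_top)]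
  refine Finset.sum_congr rfl (fun i _ => ?_)
  rw [integral_smul_measure, integral_map (hg i).aemeasurable hfm.aestronglyMeasurable,
    ENNReal.toReal_ofReal (hp i), smul_eq_mul]

lemma markov_lintegral {k : ℕ} (g : Fin k → ℝ → ℝ) (hg : ∀ i, Measurable (g i)) (p : Fin k → ℝ)
    (m : Measure ℝ) (f : ℝ → ENNReal) (hfm : Measurable f) :
    ∫⁻ x, f x ∂(markovOp g p m) =
      ∑ i : Fin k, ENNReal.ofReal (p i) * ∫⁻ x, f (g i x) ∂m := by
  rw [markovOp, lintegral_finset_sum_measure]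
  refine Finset.sum_congr rfl (fun i _ => ?_)
  rw [lintegral_smul_measure, lintegral_map hfm (hg i), smul_eq_mul]

end Aux6

/-- If IFSs `(Sseq n, p)` converge to `(Slim, p)` in `d₀` and their
invariant measures all lie in a fixed `N_{M,α}`, then some subsequence of the
invariant measures converges weakly to a measure invariant for `(Slim, p)`,
which moreover lies in `N_{M,α}`. -/
theorem limit_of_invariant_measures (k : ℕ)
    (Sseq : ℕ → Fin k → ℝ → ℝ) (Slim : Fin k → ℝ → ℝ) (p : Fin k → ℝ)
    (hp : ProbVec p)
    (hm : ∀ i, Measurable (Slim i)) (hc : ∀ i, ContinuousOn (Slim i) (Icc (0 : ℝ) 1))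
    (ht : ∀ i, MapsTo (Slim i) (Icc (0 : ℝ) 1) (Icc (0 : ℝ) 1))
    (hmn : ∀ n i, Measurable (Sseq n i))
    (hcn : ∀ n i, ContinuousOn (Sseq n i) (Icc (0 : ℝ) 1))
    (htn : ∀ n i, MapsTo (Sseq n i) (Icc (0 : ℝ) 1) (Icc (0 : ℝ) 1))
    (M α : ℝ) (hM : 0 < M) (hα : α ∈ Ioo (0 : ℝ) 1)
    (μ : ℕ → Measure ℝ) (hμ : ∀ n, μ n ∈ Nset M α)
    (hinv : ∀ n, markovOp (Sseq n) p (μ n) = μ n)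
    (hconv : Tendsto (fun n => dzero (Sseq n) Slim p p) atTop (𝓝 0)) :
    ∃ φ : ℕ → ℕ, StrictMono φ ∧ ∃ ν : Measure ℝ, ν ∈ Nset M α ∧
      markovOp Slim p ν = ν ∧
      ∀ f : ℝ → ℝ, Continuous f →
        Tendsto (fun n => ∫ x, f x ∂(μ (φ n))) atTop (𝓝 (∫ x, f x ∂ν)) := by
  obtain ⟨hp_nonneg, hp_sum⟩ := hp
  -- basic facts about the measures μ n
  have hprob : ∀ n, IsProbabilityMeasure (μ n) := fun n => (hμ n).1.1
  have hIoo1 : ∀ n, μ n (Ioo (0:ℝ) 1) = 1 := fun n => (hμ n).1.2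
  have hcompl : ∀ n, μ n ((Ioo (0:ℝ) 1)ᶜ) = 0 := by
    intro n
    haveI := hprob n
    exact (prob_compl_eq_zero_iff measurableSet_Ioo).mpr (hIoo1 n)
  have hae : ∀ n, ∀ᵐ x ∂(μ n), x ∈ Ioo (0:ℝ) 1 := by
    intro n
    rw [ae_iff]
    convert hcompl n using 2
    rfl
  -- Helly selection
  obtain ⟨φ, hφ, G, hGmono, hGmem, hGconv⟩ := helly_exists μ hprob
  have hGnn : ∀ q, 0 ≤ G q := fun q => (hGmem q).1
  set μ' : ℕ → Measure ℝ := fun n => μ (φ n) with hμ'def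
  have hfin' : ∀ n, IsFiniteMeasure (μ' n) := fun n => by
    haveI := hprob (φ n); exact inferInstance
  -- G vanishes below 0
  have hG0 : ∀ q : ℚ, (q:ℝ) ≤ 0 → G q = 0 := by
    intro q hq
    have hz : ∀ n, (μ' n (Iic (q:ℝ))).toReal = 0 := by
      intro n
      have hnull : μ' n (Iic (q:ℝ)) = 0 := by
        refine measure_mono_null ?_ (hcompl (φ n))
        intro x hx
        simp only [mem_Iic] at hx
        simp only [mem_compl_iff, mem_Ioo, not_and, not_lt]
        intro h0x; linarith
      rw [hnull]; simp
    have h2 : Tendsto (fun n => (μ' n (Iic (q:ℝ))).toReal) atTop (𝓝 0) := by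
      simp only [hz]; exact tendsto_const_nhds
    exact tendsto_nhds_unique (hGconv q) h2
  -- G equals 1 above 1
  have hG1 : ∀ q : ℚ, (1:ℝ) ≤ (q:ℝ) → G q = 1 := by
    intro q hq
    have hz : ∀ n, (μ' n (Iic (q:ℝ))).toReal = 1 := by
      intro n
      haveI := hprob (φ n)
      have h1 : μ' n (Iic (q:ℝ)) = 1 := by
        refine le_antisymm prob_le_one ?_
        rw [← hIoo1 (φ n)]
        refine measure_mono ?_
        intro x hx
        exact le_trans hx.2.le hq
      rw [h1]; simp
    have h2 : Tendsto (fun n => (μ' n (Iic (q:ℝ))).toReal) atTop (𝓝 1) := by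
      simp only [hz]; exact tendsto_const_nhds
    exact tendsto_nhds_unique (hGconv q) h2
  -- M is at least 1
  have hM1 : (1:ℝ) ≤ M := by
    have h1 := ((hμ 0).2 1 ⟨zero_le_one, le_refl 1⟩).1
    have h2 : (1:ENNReal) ≤ μ 0 (Icc (0:ℝ) 1) := by
      rw [← hIoo1 0]; exact measure_mono Ioo_subset_Icc_self
    have h3 := le_trans h2 h1
    rw [Real.one_rpow, mul_one] at h3
    exact ENNReal.one_le_ofReal.mp h3
  -- upper bound on G
  have hGM : ∀ q : ℚ, 0 ≤ (q:ℝ) → (q:ℝ) ≤ 1 → G q ≤ M * (q:ℝ) ^ α := by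
    intro q h0q h1q
    refine le_of_tendsto (hGconv q) (Eventually.of_forall fun n => ?_)
    have hsub : Iic (q:ℝ) ⊆ Icc (0:ℝ) (q:ℝ) ∪ (Ioo (0:ℝ) 1)ᶜ := by
      intro x hx
      simp only [mem_Iic] at hx
      by_cases hxm : x ∈ Ioo (0:ℝ) 1
      · exact Or.inl ⟨hxm.1.le, hx⟩
      · exact Or.inr hxm
    have hle : μ' n (Iic (q:ℝ)) ≤ ENNReal.ofReal (M * (q:ℝ) ^ α) := by
      calc μ' n (Iic (q:ℝ)) ≤ μ' n (Icc (0:ℝ) (q:ℝ)) + μ' n ((Ioo (0:ℝ) 1)ᶜ) :=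
            le_trans (measure_mono hsub) (measure_union_le _ _)
        _ = μ' n (Icc (0:ℝ) (q:ℝ)) := by rw [hcompl (φ n), add_zero]
        _ ≤ ENNReal.ofReal (M * (q:ℝ) ^ α) := ((hμ (φ n)).2 (q:ℝ) ⟨h0q, h1q⟩).1
    exact ENNReal.toReal_le_of_le_ofReal (mul_nonneg hM.le (Real.rpow_nonneg h0q α)) hle
  -- lower bound on G
  have hGlb : ∀ q : ℚ, 0 ≤ (q:ℝ) → (q:ℝ) ≤ 1 → 1 - M * (1 - (q:ℝ)) ^ α ≤ G q := by
    intro q h0q h1q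
    refine ge_of_tendsto (hGconv q) (Eventually.of_forall fun n => ?_)
    have hioi : μ' n (Ioi (q:ℝ)) ≤ ENNReal.ofReal (M * (1 - (q:ℝ)) ^ α) := by
      have hsub : Ioi (q:ℝ) ⊆ Icc (1 - (1 - (q:ℝ))) 1 ∪ (Ioo (0:ℝ) 1)ᶜ := by
        intro x hx
        simp only [mem_Ioi] at hx
        by_cases hxm : x ∈ Ioo (0:ℝ) 1
        · refine Or.inl ⟨?_, hxm.2.le⟩
          have : (1:ℝ) - (1 - (q:ℝ)) = (q:ℝ) := by ring
          rw [this]; exact hx.le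
        · exact Or.inr hxm
      calc μ' n (Ioi (q:ℝ)) ≤ μ' n (Icc (1 - (1 - (q:ℝ))) 1) + μ' n ((Ioo (0:ℝ) 1)ᶜ) :=
            le_trans (measure_mono hsub) (measure_union_le _ _)
        _ = μ' n (Icc (1 - (1 - (q:ℝ))) 1) := by rw [hcompl (φ n), add_zero]
        _ ≤ ENNReal.ofReal (M * (1 - (q:ℝ)) ^ α) :=
            ((hμ (φ n)).2 (1 - (q:ℝ)) ⟨by linarith, by linarith⟩).2
    haveI := hprob (φ n)
    have hcp : μ' n (Iic (q:ℝ)) + μ' n (Ioi (q:ℝ)) = 1 := by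
      rw [← measure_union (Iic_disjoint_Ioi le_rfl) measurableSet_Ioi, Iic_union_Ioi,
        measure_univ]
    have hb := ENNReal.toReal_le_of_le_ofReal
      (mul_nonneg hM.le (Real.rpow_nonneg (by linarith) α)) hioi
    have hsumr : (μ' n (Iic (q:ℝ))).toReal + (μ' n (Ioi (q:ℝ))).toReal = 1 := by
      rw [← ENNReal.toReal_add (measure_ne_top _ _) (measure_ne_top _ _), hcp]; simp
    linarith
  -- the limit CDF
  set F := hellyF G hGmono hGnn with hFdef
  have hF0 : ∀ x : ℝ, x < 0 → F x = 0 := by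
    intro x hx
    obtain ⟨q, hq1, hq2⟩ := exists_rat_btwn hx
    refine le_antisymm ?_ (hellyF_nonneg hGmono hGnn x)
    calc F x ≤ G q := hellyF_le hGmono hGnn hq1
      _ = 0 := hG0 q hq2.le
  have hF1 : ∀ x : ℝ, 1 ≤ x → F x = 1 := by
    intro x hx
    refine le_antisymm ?_ ?_
    · obtain ⟨q, hq⟩ := exists_rat_gt x
      calc F x ≤ G q := hellyF_le hGmono hGnn hq
        _ = 1 := hG1 q (by push_cast; linarith)
    · have h1 : ((1:ℚ):ℝ) ≤ x := by push_cast; linarith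
      calc (1:ℝ) = G 1 := (hG1 1 (by norm_num)).symm
        _ ≤ F x := le_hellyF hGmono hGnn h1
  have hFM : ∀ x : ℝ, 0 ≤ x → x < 1 → F x ≤ M * x ^ α := by
    intro x h0x h1x
    refine le_of_forall_pos_le_add ?_
    intro ε hε
    have hcont : ContinuousAt (fun t : ℝ => M * t ^ α) x :=
      continuousAt_const.mul (Real.continuousAt_rpow_const x α (Or.inr hα.1.le))
    rw [Metric.continuousAt_iff] at hcont
    obtain ⟨δ, hδ, hδ'⟩ := hcont ε hε
    obtain ⟨q, hq1, hq2⟩ := exists_rat_btwn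
      (show x < min 1 (x + δ) by rw [lt_min_iff]; exact ⟨h1x, by linarith⟩)
    have hq0 : 0 ≤ (q:ℝ) := le_trans h0x hq1.le
    have hqle1 : (q:ℝ) ≤ 1 := (lt_of_lt_of_le hq2 (min_le_left _ _)).le
    have hdq : dist (q:ℝ) x < δ := by
      rw [Real.dist_eq, abs_lt]
      have := lt_of_lt_of_le hq2 (min_le_right _ _)
      constructor <;> linarith
    have h3 := hδ' hdq
    rw [Real.dist_eq, abs_lt] at h3
    have h4 := hGM q hq0 hqle1
    have h5 := hellyF_le hGmono hGnn hq1
    rw [← hFdef] at h5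
    linarith [h3.2]
  -- limits of F at ±∞
  have htop : Tendsto F atTop (𝓝 1) := by
    refine Tendsto.congr' ?_ (tendsto_const_nhds (α := ℝ) (f := atTop))
    filter_upwards [eventually_ge_atTop (1:ℝ)] with x hx
    exact (hF1 x hx).symm
  have hbot : Tendsto F atBot (𝓝 0) := by
    refine Tendsto.congr' ?_ (tendsto_const_nhds (α := ℝ) (f := atBot))
    filter_upwards [eventually_le_atBot (-1:ℝ)] with x hx
    exact (hF0 x (by linarith)).symm
  -- the limit measure
  set ν := F.measure with hνdef
  have hνprob : IsProbabilityMeasure ν := by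
    constructor
    rw [hνdef, F.measure_univ hbot htop]
    norm_num
  haveI := hνprob
  have hIic : ∀ x : ℝ, ν (Iic x) = ENNReal.ofReal (F x) := by
    intro x
    rw [hνdef, F.measure_Iic hbot]
    norm_num
  -- left N-set bound
  have hNleft : ∀ x ∈ Icc (0:ℝ) 1, ν (Icc (0:ℝ) x) ≤ ENNReal.ofReal (M * x ^ α) := by
    intro x hx
    rcases hx.2.lt_or_eq with h1x | rfl
    · calc ν (Icc (0:ℝ) x) ≤ ν (Iic x) := measure_mono Icc_subset_Iic_self
        _ = ENNReal.ofReal (F x) := hIic x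
        _ ≤ ENNReal.ofReal (M * x ^ α) := ENNReal.ofReal_le_ofReal (hFM x hx.1 h1x)
    · calc ν (Icc (0:ℝ) 1) ≤ 1 := prob_le_one
        _ ≤ ENNReal.ofReal (M * 1 ^ α) := by
            rw [Real.one_rpow, mul_one]; exact ENNReal.one_le_ofReal.mpr hM1
  -- right N-set bound
  have hNright : ∀ x ∈ Icc (0:ℝ) 1, ν (Icc (1 - x) 1) ≤ ENNReal.ofReal (M * x ^ α) := by
    intro x hx
    rcases hx.2.lt_or_eq with h1x | rfl
    · refine ENNReal.le_of_forall_pos_le_add ?_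
      intro ε hε _
      have houter : ContinuousAt (fun y : ℝ => y ^ α) (1 - (1 - x)) := by
        rw [show (1:ℝ) - (1 - x) = x by ring]
        exact Real.continuousAt_rpow_const x α (Or.inr hα.1.le)
      have hcont : ContinuousAt (fun t : ℝ => M * (1 - t) ^ α) (1 - x) :=
        continuousAt_const.mul (houter.comp ((continuous_const.sub continuous_id).continuousAt))
      rw [Metric.continuousAt_iff] at hcont
      obtain ⟨δ, hδ, hδ'⟩ := hcont (ε:ℝ) (by exact_mod_cast hε)
      obtain ⟨q, hq1, hq2⟩ := exists_rat_btwn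
        (show max 0 (1 - x - δ/2) < 1 - x by
          rw [max_lt_iff]; exact ⟨by linarith, by linarith⟩)
      have hq0 : 0 ≤ (q:ℝ) := le_trans (le_max_left _ _) hq1.le
      have hq3 : (q:ℝ) ≤ 1 := by
        have := hq2; have := hx.1; linarith
      have hGq := hGlb q hq0 hq3
      have hFq : G q ≤ F (q:ℝ) := le_hellyF hGmono hGnn (le_refl ((q:ℝ)))
      have hdq : dist (q:ℝ) (1 - x) < δ := by
        rw [Real.dist_eq, abs_lt]
        have h1 := le_trans (le_max_right _ _) hq1.le
        constructor <;> linarith [hq2]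
      have h3 := hδ' hdq
      rw [Real.dist_eq, abs_lt] at h3
      have h4 : M * (1 - (q:ℝ)) ^ α < M * x ^ α + ε := by
        have heq : M * (1 - (1 - x)) ^ α = M * x ^ α := by
          rw [show (1:ℝ) - (1 - x) = x by ring]
        have := h3.2
        rw [heq] at this
        linarith
      have hsub : Icc (1 - x) 1 ⊆ Ioc (q:ℝ) 2 := by
        intro y hy
        exact ⟨lt_of_lt_of_le hq2 hy.1, le_trans hy.2 one_le_two⟩
      calc ν (Icc (1 - x) 1) ≤ ν (Ioc (q:ℝ) 2) := measure_mono hsub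
        _ = ENNReal.ofReal (F 2 - F (q:ℝ)) := by rw [hνdef]; exact F.measure_Ioc _ _
        _ ≤ ENNReal.ofReal (M * x ^ α + ε) := by
            refine ENNReal.ofReal_le_ofReal ?_
            have hF2 : F 2 = 1 := hF1 2 one_le_two
            rw [hF2]
            have h5 : 1 - M * (1 - (q:ℝ)) ^ α ≤ F (q:ℝ) := le_trans hGq hFq
            linarith
        _ ≤ ENNReal.ofReal (M * x ^ α) + ε := by
            rw [ENNReal.ofReal_add (mul_nonneg hM.le (Real.rpow_nonneg hx.1 α)) (by positivity)]
            simp [ENNReal.ofReal_coe_nnreal]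
    · calc ν (Icc (1 - 1) 1) ≤ 1 := prob_le_one
        _ ≤ ENNReal.ofReal (M * 1 ^ α) := by
            rw [Real.one_rpow, mul_one]; exact ENNReal.one_le_ofReal.mpr hM1
  -- ν gives no mass outside (0,1)
  have hν0 : ν (Iic (0:ℝ)) = 0 := by
    have hF00 : F 0 = 0 := by
      refine le_antisymm ?_ (hellyF_nonneg hGmono hGnn 0)
      have := hFM 0 le_rfl one_pos
      rwa [Real.zero_rpow hα.1.ne', mul_zero] at this
    rw [hIic 0, hF00, ENNReal.ofReal_zero]
  have hν1 : ν (Ici (1:ℝ)) = 0 := by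
    have h1 : ν {(1:ℝ)} = 0 := by
      have := hNright 0 ⟨le_rfl, zero_le_one⟩
      rw [sub_zero, Real.zero_rpow hα.1.ne', mul_zero, ENNReal.ofReal_zero, Icc_self] at this
      exact le_antisymm this zero_le
    have h2 : ν (Ioi (1:ℝ)) = 0 := by
      have hc1 : ν ((Iic (1:ℝ))ᶜ) = 0 := by
        refine (prob_compl_eq_zero_iff measurableSet_Iic).mpr ?_
        rw [hIic 1, hF1 1 le_rfl, ENNReal.ofReal_one]
      rwa [compl_Iic] at hc1
    have hsub : Ici (1:ℝ) ⊆ {(1:ℝ)} ∪ Ioi 1 := by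
      intro y hy
      rcases eq_or_lt_of_le (mem_Ici.mp hy : (1:ℝ) ≤ y) with h | h
      · exact Or.inl h.symm
      · exact Or.inr h
    exact measure_mono_null hsub (measure_union_null h1 h2)
  have hIoocompl : (Ioo (0:ℝ) 1)ᶜ = Iic 0 ∪ Ici 1 := by
    ext y
    simp only [mem_compl_iff, mem_Ioo, not_and, not_lt, mem_union, mem_Iic, mem_Ici]
    constructor
    · intro h
      rcases le_or_gt y 0 with h0 | h0
      · exact Or.inl h0
      · exact Or.inr (h h0)
    · intro h h0
      rcases h with h | h
      · linarith
      · exact h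
  have hνcompl : ν ((Ioo (0:ℝ) 1)ᶜ) = 0 := by
    rw [hIoocompl]
    exact measure_union_null hν0 hν1
  have hνIoo : ν (Ioo (0:ℝ) 1) = 1 :=
    (prob_compl_eq_zero_iff measurableSet_Ioo).mp hνcompl
  have haeν : ∀ᵐ x ∂ν, x ∈ Ioo (0:ℝ) 1 := by
    rw [ae_iff]
    convert hνcompl using 2
    rfl
  -- weak convergence via the portmanteau theorem
  have hνfin : IsFiniteMeasure ν := inferInstance
  set pm : ℕ → ProbabilityMeasure ℝ := fun n => ⟨μ' n, hprob (φ n)⟩ with hpm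
  set pν : ProbabilityMeasure ℝ := ⟨ν, hνprob⟩ with hpν
  have hD : {t : ℝ | ¬ ContinuousAt F t}.Countable := F.mono.countable_not_continuousAt
  have hDense : Dense {t : ℝ | ¬ ContinuousAt F t}ᶜ := hD.dense_compl ℝ
  have hcell : ∀ a b : ℝ, ContinuousAt F a → ContinuousAt F b →
      Tendsto (fun n => (μ' n (Ioc a b)).toReal) atTop (𝓝 ((ν (Ioc a b)).toReal)) := by
    intro a b ha hb
    rcases le_or_gt b a with hba | hab
    · have h1 : Ioc a b = ∅ := Ioc_eq_empty (not_lt.mpr hba)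
      rw [h1]
      simp only [measure_empty, ENNReal.toReal_zero]
      exact tendsto_const_nhds
    · have hmean : ∀ n, (μ' n (Ioc a b)).toReal = (μ' n (Iic b)).toReal - (μ' n (Iic a)).toReal := by
        intro n
        have hsplit : μ' n (Iic a) + μ' n (Ioc a b) = μ' n (Iic b) := by
          rw [← measure_union (Iic_disjoint_Ioc le_rfl) measurableSet_Ioc,
            Iic_union_Ioc_eq_Iic hab.le]
        have h2 := congrArg ENNReal.toReal hsplit
        rw [ENNReal.toReal_add (measure_ne_top _ _) (measure_ne_top _ _)] at h2
        linarith
      have hν' : (ν (Ioc a b)).toReal = F b - F a := by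
        rw [hνdef, F.measure_Ioc, ENNReal.toReal_ofReal (by linarith [F.mono hab.le] : (0:ℝ) ≤ F b - F a)]
      refine Tendsto.congr (fun n => (hmean n).symm) ?_
      rw [hν']
      exact (tendsto_cdf_at_cont μ' hfin' hGmono hGnn hGconv hb).sub
        (tendsto_cdf_at_cont μ' hfin' hGmono hGnn hGconv ha)
  have h_opens : ∀ U : Set ℝ, IsOpen U → pν U ≤ atTop.liminf (fun i => pm i U) := by
    intro U hU
    have hbdd : IsBoundedUnder (· ≥ ·) atTop (fun i => pm i U) :=
      isBoundedUnder_of ⟨0, fun n => zero_le⟩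
    have hcob : IsCoboundedUnder (· ≥ ·) atTop (fun i => pm i U) :=
      IsBoundedUnder.isCoboundedUnder_ge
        (isBoundedUnder_of ⟨1, fun n => ProbabilityMeasure.apply_le_one (pm n) U⟩)
    rw [le_liminf_iff hcob hbdd]
    intro y hy
    have hylt : (y : ENNReal) < ν U := by
      have h1 : ((pν U : NNReal) : ENNReal) = ν U :=
        ProbabilityMeasure.ennreal_coeFn_eq_coeFn_toMeasure pν U
      rw [← h1]
      exact_mod_cast hy
    -- inner regularity
    have hreg : ν.InnerRegular := inferInstance
    obtain ⟨K, hKU, hKcomp, hKgt⟩ := hreg.innerRegular hU.measurableSet (y : ENNReal) hylt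
    -- choose continuity-point intervals around each point of K
    have hpick : ∀ x ∈ K, ∃ a b : ℝ, ContinuousAt F a ∧ ContinuousAt F b ∧ a < x ∧ x < b ∧
        Icc a b ⊆ U := by
      intro x hx
      obtain ⟨δ, hδ, hball⟩ := Metric.isOpen_iff.mp hU x (hKU hx)
      obtain ⟨a, haD, haI⟩ := hDense.exists_mem_open isOpen_Ioo
        (nonempty_Ioo.mpr (by linarith : x - δ/2 < x))
      obtain ⟨b, hbD, hbI⟩ := hDense.exists_mem_open isOpen_Ioo
        (nonempty_Ioo.mpr (by linarith : x < x + δ/2))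
      simp only [mem_compl_iff, mem_setOf_eq, not_not] at haD hbD
      refine ⟨a, b, haD, hbD, haI.2, hbI.1, ?_⟩
      intro z hz
      refine hball ?_
      rw [Metric.mem_ball, Real.dist_eq, abs_lt]
      have h1 := haI.1; have h2 := hbI.2
      constructor <;> [linarith [hz.1]; linarith [hz.2]]
    choose! ca cb hca hcb hax hxb hIccU using hpick
    have hcover : K ⊆ ⋃ x : K, Ioo (ca x) (cb x) := by
      intro x hx
      exact mem_iUnion.mpr ⟨⟨x, hx⟩, hax x hx, hxb x hx⟩
    obtain ⟨t, ht'⟩ := hKcomp.elim_finite_subcover (fun x : K => Ioo (ca x) (cb x))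
      (fun _ => isOpen_Ioo) hcover
    set cells : Finset (ℝ × ℝ) := t.image (fun i : K => (ca i.1, cb i.1)) with hcells
    set V : Set ℝ := ⋃ c ∈ cells, Ioc c.1 c.2 with hV
    have hKV : K ⊆ V := by
      intro x hx
      obtain ⟨i, hit, hxi⟩ := mem_iUnion₂.mp (ht' hx)
      refine mem_iUnion₂.mpr ⟨(ca i.1, cb i.1), Finset.mem_image_of_mem _ hit, ?_⟩
      exact ⟨hxi.1, hxi.2.le⟩
    have hVU : V ⊆ U := by
      intro x hx
      obtain ⟨c, hcmem, hxc⟩ := mem_iUnion₂.mp hx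
      obtain ⟨i, hit, rfl⟩ := Finset.mem_image.mp hcmem
      exact hIccU i.1 i.2 ⟨hxc.1.le, hxc.2⟩
    have hPcells : ∀ c ∈ cells, ContinuousAt F c.1 ∧ ContinuousAt F c.2 := by
      intro c hcmem
      obtain ⟨i, hit, rfl⟩ := Finset.mem_image.mp hcmem
      exact ⟨hca i.1 i.2, hcb i.1 i.2⟩
    have hVtendsto := tendsto_measure_finset_union μ' ν hfin' hνfin (fun t => ContinuousAt F t)
      hcell cells.card cells le_rfl hPcells
    have hyV : (y:ℝ) < (ν V).toReal := by
      have h1 : (y : ENNReal) < ν V := lt_of_lt_of_le hKgt (measure_mono hKV)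
      have h2 := ENNReal.toReal_strict_mono (measure_ne_top ν V) h1
      rwa [ENNReal.coe_toReal] at h2
    have hev := hVtendsto.eventually (eventually_gt_nhds hyV)
    filter_upwards [hev] with n hn
    have h1 : (y:ℝ) < (μ' n U).toReal :=
      lt_of_lt_of_le hn (ENNReal.toReal_mono (measure_ne_top _ _) (measure_mono hVU))
    have h2 : ((pm n U : NNReal) : ENNReal) = μ' n U :=
      ProbabilityMeasure.ennreal_coeFn_eq_coeFn_toMeasure (pm n) U
    have h3 : ((pm n U : NNReal) : ℝ) = (μ' n U).toReal := by
      rw [← h2, ENNReal.coe_toReal]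
    rw [← NNReal.coe_lt_coe, h3]
    exact h1
  have htends : Tendsto pm atTop (𝓝 pν) := MeasureTheory.tendsto_of_forall_isOpen_le_liminf h_opens
  have hBCF : ∀ f : ℝ →ᵇ ℝ, Tendsto (fun n => ∫ x, f x ∂(μ' n)) atTop (𝓝 (∫ x, f x ∂ν)) := by
    intro f
    exact ProbabilityMeasure.tendsto_iff_forall_integral_tendsto.mp htends f
  -- sup-distance facts
  have hsupfacts : ∀ n i, 0 ≤ supOn (Icc (0:ℝ) 1) (fun x => Sseq n i x - Slim i x) ∧
      ∀ x ∈ Icc (0:ℝ) 1, |Sseq n i x - Slim i x| ≤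
        supOn (Icc (0:ℝ) 1) (fun x => Sseq n i x - Slim i x) := by
    intro n i
    have hcont : ContinuousOn (fun x => |Sseq n i x - Slim i x|) (Icc (0:ℝ) 1) :=
      ((hcn n i).sub (hc i)).abs
    have hbdd : BddAbove ((fun x => |Sseq n i x - Slim i x|) '' Icc (0:ℝ) 1) :=
      (isCompact_Icc.image_of_continuousOn hcont).bddAbove
    have hmem : ∀ x ∈ Icc (0:ℝ) 1, |Sseq n i x - Slim i x| ≤
        supOn (Icc (0:ℝ) 1) (fun x => Sseq n i x - Slim i x) := by
      intro x hx
      exact le_csSup hbdd ⟨x, hx, rfl⟩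
    refine ⟨?_, hmem⟩
    exact le_trans (abs_nonneg _) (hmem (1/2) ⟨by norm_num, by norm_num⟩)
  have hdzero_eq : ∀ n, dzero (Sseq n) Slim p p =
      ∑ i : Fin k, supOn (Icc (0:ℝ) 1) (fun x => Sseq n i x - Slim i x) := by
    intro n
    rw [dzero]
    refine Finset.sum_congr rfl (fun i _ => ?_)
    rw [sub_self, abs_zero, zero_add]
  have hsup : ∀ i, Tendsto (fun n => supOn (Icc (0:ℝ) 1)
      (fun x => Sseq n i x - Slim i x)) atTop (𝓝 0) := by
    intro i
    have hconv' : Tendsto (fun n => ∑ j : Fin k, supOn (Icc (0:ℝ) 1)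
        (fun x => Sseq n j x - Slim j x)) atTop (𝓝 0) :=
      hconv.congr hdzero_eq
    refine tendsto_of_tendsto_of_tendsto_of_le_of_le tendsto_const_nhds hconv'
      (fun n => (hsupfacts n i).1) (fun n => ?_)
    exact Finset.single_le_sum (fun j _ => (hsupfacts n j).1) (Finset.mem_univ i)
  -- Markov identity for the invariant measures
  have hmarkov_eq : ∀ n (f : ℝ → ℝ), Measurable f → ∀ C : ℝ, (∀ x, ‖f x‖ ≤ C) →
      ∫ x, f x ∂(μ n) = ∑ i : Fin k, p i * ∫ x, f (Sseq n i x) ∂(μ n) := by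
    intro n f hf C hC
    haveI := hprob n
    conv_lhs => rw [← hinv n]
    exact markov_integral _ (hmn n) _ hp_nonneg _ f hf C hC
  -- clamping
  have hclamp_mem : ∀ x, clampI x ∈ Icc (0:ℝ) 1 :=
    fun x => ⟨le_max_left _ _, max_le zero_le_one (min_le_left _ _)⟩
  have hclamp_eq : ∀ x ∈ Icc (0:ℝ) 1, clampI x = x := by
    intro x hx
    rw [clampI, min_eq_right hx.2, max_eq_right hx.1]
  have hclamp_cont : Continuous clampI := by
    exact continuous_const.max (continuous_const.min continuous_id)
  set Sc : Fin k → ℝ → ℝ := fun i x => Slim i (clampI x) with hScdef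
  have hSc_cont : ∀ i, Continuous (Sc i) :=
    fun i => (hc i).comp_continuous hclamp_cont hclamp_mem
  -- the key integral identity for the limit measure
  have hId : ∀ g : ℝ →ᵇ ℝ, ∫ x, g x ∂ν = ∑ i : Fin k, p i * ∫ x, g (Slim i x) ∂ν := by
    intro g
    set gi : Fin k → (ℝ →ᵇ ℝ) := fun i => g.compContinuous ⟨Sc i, hSc_cont i⟩ with hgidef
    have hA : Tendsto (fun n => ∫ x, g x ∂(μ' n)) atTop (𝓝 (∫ x, g x ∂ν)) := hBCF g
    have hB : Tendsto (fun n => ∑ i : Fin k, p i * ∫ x, g (Sc i x) ∂(μ' n)) atTop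
        (𝓝 (∑ i : Fin k, p i * ∫ x, g (Sc i x) ∂ν)) := by
      refine tendsto_finset_sum _ (fun i _ => ?_)
      exact (hBCF (gi i)).const_mul (p i)
    have hdiff : Tendsto (fun n => (∫ x, g x ∂(μ' n)) -
        ∑ i : Fin k, p i * ∫ x, g (Sc i x) ∂(μ' n)) atTop (𝓝 0) := by
      rw [NormedAddCommGroup.tendsto_nhds_zero]
      intro ε hε
      have hg_unif : UniformContinuousOn g (Icc (0:ℝ) 1) :=
        isCompact_Icc.uniformContinuousOn_of_continuous g.continuous.continuousOn
      rw [Metric.uniformContinuousOn_iff] at hg_unif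
      obtain ⟨δ, hδ, hδ'⟩ := hg_unif (ε/2) (by linarith)
      have hev : ∀ᶠ n in atTop, ∀ i : Fin k,
          supOn (Icc (0:ℝ) 1) (fun x => Sseq (φ n) i x - Slim i x) < δ := by
        rw [eventually_all]
        intro i
        have h1 := (hsup i).comp hφ.tendsto_atTop
        exact h1.eventually (eventually_lt_nhds hδ)
      filter_upwards [hev] with n hn
      haveI := hprob (φ n)
      have hint1 : ∀ i : Fin k, Integrable (fun x => g (Sseq (φ n) i x)) (μ (φ n)) := by
        intro i
        refine (integrable_const ‖g‖).mono' ?_ (Eventually.of_forall (fun x => g.norm_coe_le_norm _))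
        exact (g.continuous.measurable.comp (hmn (φ n) i)).aestronglyMeasurable
      have hint2 : ∀ i : Fin k, Integrable (fun x => g (Sc i x)) (μ (φ n)) := by
        intro i
        refine (integrable_const ‖g‖).mono' ?_ (Eventually.of_forall (fun x => g.norm_coe_le_norm _))
        exact (g.continuous.measurable.comp (hSc_cont i).measurable).aestronglyMeasurable
      have heq := hmarkov_eq (φ n) g g.continuous.measurable ‖g‖ (fun x => g.norm_coe_le_norm x)
      have hμeq : ∫ x, g x ∂(μ' n) = ∑ i : Fin k, p i * ∫ x, g (Sseq (φ n) i x) ∂(μ (φ n)) := heq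
      rw [hμeq, ← Finset.sum_sub_distrib]
      have hterm : ∀ i : Fin k, ‖p i * ∫ x, g (Sseq (φ n) i x) ∂(μ (φ n)) -
          p i * ∫ x, g (Sc i x) ∂(μ' n)‖ ≤ p i * (ε/2) := by
        intro i
        rw [← mul_sub, norm_mul, Real.norm_of_nonneg (hp_nonneg i)]
        refine mul_le_mul_of_nonneg_left ?_ (hp_nonneg i)
        have hsub : ∫ x, g (Sseq (φ n) i x) ∂(μ (φ n)) - ∫ x, g (Sc i x) ∂(μ' n) =
            ∫ x, (g (Sseq (φ n) i x) - g (Sc i x)) ∂(μ (φ n)) :=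
          (integral_sub (hint1 i) (hint2 i)).symm
        rw [hsub]
        have hbound : ∀ᵐ x ∂(μ (φ n)), ‖g (Sseq (φ n) i x) - g (Sc i x)‖ ≤ ε/2 := by
          filter_upwards [hae (φ n)] with x hx
          have hxI : x ∈ Icc (0:ℝ) 1 := Ioo_subset_Icc_self hx
          have h1 : Sseq (φ n) i x ∈ Icc (0:ℝ) 1 := htn (φ n) i hxI
          have h2 : Sc i x = Slim i x := by
            simp only [hScdef]
            rw [hclamp_eq x hxI]
          have h3 : Slim i x ∈ Icc (0:ℝ) 1 := ht i hxI
          have h4 : dist (Sseq (φ n) i x) (Slim i x) < δ := by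
            rw [Real.dist_eq]
            exact lt_of_le_of_lt ((hsupfacts (φ n) i).2 x hxI) (hn i)
          have h5 := hδ' _ h1 _ h3 h4
          rw [h2]
          rw [Real.dist_eq] at h5
          exact h5.le
        calc ‖∫ x, (g (Sseq (φ n) i x) - g (Sc i x)) ∂(μ (φ n))‖
            ≤ (ε/2) * ((μ (φ n)) univ).toReal := norm_integral_le_of_norm_le_const hbound
          _ = ε/2 := by rw [measure_univ]; simp
      calc ‖∑ i : Fin k, (p i * ∫ x, g (Sseq (φ n) i x) ∂(μ (φ n)) -
              p i * ∫ x, g (Sc i x) ∂(μ' n))‖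
          ≤ ∑ i : Fin k, ‖p i * ∫ x, g (Sseq (φ n) i x) ∂(μ (φ n)) -
              p i * ∫ x, g (Sc i x) ∂(μ' n)‖ := norm_sum_le _ _
        _ ≤ ∑ i : Fin k, p i * (ε/2) := Finset.sum_le_sum (fun i _ => hterm i)
        _ = ε/2 := by rw [← Finset.sum_mul, hp_sum, one_mul]
        _ < ε := by linarith
    have hAB : Tendsto (fun n => ∫ x, g x ∂(μ' n)) atTop
        (𝓝 (∑ i : Fin k, p i * ∫ x, g (Sc i x) ∂ν)) := by
      have h1 := hB.add hdiff
      rw [add_zero] at h1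
      refine h1.congr (fun n => ?_)
      ring
    have huniq := tendsto_nhds_unique hA hAB
    rw [huniq]
    refine Finset.sum_congr rfl (fun i _ => ?_)
    congr 1
    refine integral_congr_ae ?_
    filter_upwards [haeν] with x hx
    simp only [hScdef]
    rw [hclamp_eq x (Ioo_subset_Icc_self hx)]
  -- invariance of ν
  haveI hmarkprob : IsProbabilityMeasure (markovOp Slim p ν) :=
    markov_isProbability Slim hm p ⟨hp_nonneg, hp_sum⟩ ν
  have hinvν : markovOp Slim p ν = ν := by
    refine ext_of_forall_lintegral_eq_of_IsFiniteMeasure ?_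
    intro f
    obtain ⟨Cf, hCf⟩ := f.bounded
    have hfb : ∀ x : ℝ, ‖(f x : ℝ)‖ ≤ (f 0 : ℝ) + Cf := by
      intro x
      have h1 := hCf x 0
      rw [NNReal.dist_eq] at h1
      rw [Real.norm_of_nonneg (f x).coe_nonneg]
      have := abs_le.mp h1
      linarith [this.1, this.2]
    set fr : ℝ →ᵇ ℝ := BoundedContinuousFunction.ofNormedAddCommGroup (fun x => (f x : ℝ))
      (NNReal.continuous_coe.comp f.continuous) ((f 0 : ℝ) + Cf) hfb with hfrdef
    have hfmE : Measurable (fun x : ℝ => (f x : ENNReal)) :=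
      measurable_coe_nnreal_ennreal.comp f.continuous.measurable
    have hint : ∀ i : Fin k, Integrable (fun x => (f (Slim i x) : ℝ)) ν := by
      intro i
      refine (integrable_const ((f 0 : ℝ) + Cf)).mono' ?_ (Eventually.of_forall (fun x => hfb _))
      exact ((NNReal.continuous_coe.comp f.continuous).measurable.comp (hm i)).aestronglyMeasurable
    have hfr_int : Integrable (fun x => (f x : ℝ)) ν := fr.integrable ν
    calc ∫⁻ x, (f x : ENNReal) ∂(markovOp Slim p ν)
        = ∑ i : Fin k, ENNReal.ofReal (p i) * ∫⁻ x, (f (Slim i x) : ENNReal) ∂ν :=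
          markov_lintegral Slim hm p ν _ hfmE
      _ = ∑ i : Fin k, ENNReal.ofReal (p i) *
            ENNReal.ofReal (∫ x, (f (Slim i x) : ℝ) ∂ν) := by
          refine Finset.sum_congr rfl (fun i _ => ?_)
          rw [lintegral_coe_eq_integral (fun x => f (Slim i x)) (hint i)]
      _ = ∑ i : Fin k, ENNReal.ofReal (p i * ∫ x, (f (Slim i x) : ℝ) ∂ν) := by
          refine Finset.sum_congr rfl (fun i _ => ?_)
          rw [ENNReal.ofReal_mul (hp_nonneg i)]
      _ = ENNReal.ofReal (∑ i : Fin k, p i * ∫ x, (f (Slim i x) : ℝ) ∂ν) := by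
          rw [ENNReal.ofReal_sum_of_nonneg]
          intro i _
          exact mul_nonneg (hp_nonneg i) (integral_nonneg (fun x => (f (Slim i x)).coe_nonneg))
      _ = ENNReal.ofReal (∫ x, (f x : ℝ) ∂ν) := by
          have h := (hId fr).symm
          have hfr_coe : ∀ y : ℝ, fr y = (f y : ℝ) := fun y => rfl
          simp only [hfr_coe] at h
          rw [h]
      _ = ∫⁻ x, (f x : ENNReal) ∂ν := by
          rw [lintegral_coe_eq_integral f hfr_int]
  -- conclusion
  refine ⟨φ, hφ, ν, ⟨⟨hνprob, hνIoo⟩, fun x hx => ⟨hNleft x hx, hNright x hx⟩⟩, hinvν, ?_⟩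
  intro f hf
  obtain ⟨Cf, hCf⟩ := isCompact_Icc.exists_bound_of_continuousOn hf.continuousOn
  set fb : ℝ →ᵇ ℝ := BoundedContinuousFunction.ofNormedAddCommGroup (fun x => f (clampI x))
    (hf.comp hclamp_cont) Cf (fun x => hCf _ (hclamp_mem x)) with hfbdef
  have h1 : ∀ n, ∫ x, f x ∂(μ (φ n)) = ∫ x, fb x ∂(μ (φ n)) := by
    intro n
    refine integral_congr_ae ?_
    filter_upwards [hae (φ n)] with x hx
    show f x = f (clampI x)
    rw [hclamp_eq x (Ioo_subset_Icc_self hx)]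
  have h2 : ∫ x, f x ∂ν = ∫ x, fb x ∂ν := by
    refine integral_congr_ae ?_
    filter_upwards [haeν] with x hx
    show f x = f (clampI x)
    rw [hclamp_eq x (Ioo_subset_Icc_self hx)]
  rw [h2]
  exact ((tendsto_congr h1).mpr (hBCF fb))

end
end
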